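/- arXiv:0805.4307 — 5 statements merged into one kernel-verified Lean document; each statement's English description precedes it below -/
import Mathlib

section
/- For all histories H, H' one has ‖Λ(H) − Λ(H')‖ ≤ d(H,H') + ‖G(0)(H(0) − H'(0))‖. Consequently, if d(H,H') = 0 and H(0) = H'(0) — in particular if H and H' are equivalent — then σ(H) = σ(H'), z(H) = z(H') and 𝒮(H) = 𝒮(H'): two equivalent histories determine the same macroscopic stress, substructural self-action and microstress. -/
open MeasureTheory Filter Topology
open scoped ENNReal Classical

noncomputable section

/-- The state space `V = M₃ₓ₃(ℝ) × ℝᵏ × M_{k×3}(ℝ)`, each factor Euclidean. -/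
abbrev V (k : ℕ) :=
  EuclideanSpace ℝ (Fin 3 × Fin 3) × EuclideanSpace ℝ (Fin k) ×
    EuclideanSpace ℝ (Fin k × Fin 3)

/-- The norm `‖v‖ := |v_W| + |v_ν| + |v_N|`. -/
def vnorm {k : ℕ} (v : V k) : ℝ := ‖v.1‖ + ‖v.2.1‖ + ‖v.2.2‖

/-- The inner product of the Euclidean factors. -/
def vinner {k : ℕ} (v w : V k) : ℝ :=
  (inner ℝ v.1 w.1 : ℝ) + (inner ℝ v.2.1 w.2.1 : ℝ) + (inner ℝ v.2.2 w.2.2 : ℝ)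

/-- The operator norm on `End(V)` corresponding to `vnorm`. -/
def opnorm {k : ℕ} (A : V k →L[ℝ] V k) : ℝ :=
  sSup ((fun v => vnorm (A v)) '' {v : V k | vnorm v ≤ 1})

/-- A history: a bounded, right-continuous map `[0,∞) → V` of bounded variation. -/
structure IsHistory {k : ℕ} (H : ℝ → V k) : Prop where
  bounded : ∃ C : ℝ, ∀ s : ℝ, 0 ≤ s → vnorm (H s) ≤ C
  rightCont : ∀ s : ℝ, 0 ≤ s → ContinuousWithinAt H (Set.Ici s) s
  bv : BoundedVariationOn H (Set.Ici 0)

/-- The relaxation function `G` is absolutely continuous with Bochner-integrable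
derivative `G'` on `[0,∞)`. -/
structure IsRelaxation {k : ℕ} (G G' : ℝ → (V k →L[ℝ] V k)) : Prop where
  integrable : IntegrableOn G' (Set.Ici 0)
  ftc : ∀ t : ℝ, 0 ≤ t → G t = G 0 + ∫ s in Set.Icc (0:ℝ) t, G' s

/-- The distance `d(H,H') := sup_{t>0} ‖∫₀^∞ Ġ(s+t)(H(s) − H'(s)) ds‖`. -/
def hdist {k : ℕ} (G' : ℝ → (V k →L[ℝ] V k)) (H H' : ℝ → V k) : ℝ≥0∞ :=
  ⨆ t : Set.Ioi (0:ℝ), ENNReal.ofReal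
    (vnorm (∫ s in Set.Ioi (0:ℝ), (G' (s + (t:ℝ))) (H s - H' s)))

/-- The response functional `Λ(H) := G(0)H(0) + ∫₀^∞ Ġ(s)H(s) ds`. -/
def response {k : ℕ} (G G' : ℝ → (V k →L[ℝ] V k)) (H : ℝ → V k) : V k :=
  (G 0) (H 0) + ∫ s in Set.Ioi (0:ℝ), (G' s) (H s)

/-- The prolongation `K_p∗H` of a history `H` by a process `K` of duration `p`. -/
def prolong {k : ℕ} (p : ℝ) (K H : ℝ → V k) : ℝ → V k :=
  fun s => if s < p then K s else H (s - p)

/-- `K` (of duration `p`) prolongs `H`: `lim_{s↗p} K(s) = H(0)`. -/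
def Prolongs {k : ℕ} (p : ℝ) (K H : ℝ → V k) : Prop :=
  Tendsto K (𝓝[<] p) (𝓝 (H 0))

/-- Equivalence of histories: same initial value and equal responses under every
prolongation. -/
def EquivHist {k : ℕ} (G G' : ℝ → (V k →L[ℝ] V k)) (H H' : ℝ → V k) : Prop :=
  H 0 = H' 0 ∧ ∀ p : ℝ, 0 < p → ∀ K : ℝ → V k, Prolongs p K H →
    response G G' (prolong p K H) = response G G' (prolong p K H')

/-- The shifted history `Hˢ(u) := H(s+u)`. -/
def shift {k : ℕ} (H : ℝ → V k) (s : ℝ) : ℝ → V k := fun u => H (s + u)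

/-- The work density `w(H) := ∫₀^∞ ⟨Λ(Hˢ), Ḣ(s)⟩ ds` of a differentiable history
`H` with derivative `Hd`. -/
def work {k : ℕ} (G G' : ℝ → (V k →L[ℝ] V k)) (H Hd : ℝ → V k) : ℝ :=
  ∫ s in Set.Ioi (0:ℝ), vinner (response G G' (shift H s)) (Hd s)

/-- A differentiable history: locally absolutely continuous with derivative
`Hd ∈ L¹`. -/
structure IsDiffHistory {k : ℕ} (H Hd : ℝ → V k) : Prop where
  hist : IsHistory H
  integrable : IntegrableOn Hd (Set.Ici 0)
  ftc : ∀ t : ℝ, 0 ≤ t → H t = H 0 + ∫ s in Set.Icc (0:ℝ) t, Hd s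

/-- A differentiable process of duration `p` with derivative `Kd`. -/
structure IsDiffProcess {k : ℕ} (p : ℝ) (K Kd : ℝ → V k) : Prop where
  pos : 0 < p
  integrable : IntegrableOn Kd (Set.Icc 0 p)
  ftc : ∀ t : ℝ, 0 ≤ t → t < p → K t = K 0 + ∫ s in Set.Icc (0:ℝ) t, Kd s

/-- The work over a prolongation: `w(K_p, H) := w(K_p∗H) − w(H)`. -/
def workP {k : ℕ} (G G' : ℝ → (V k →L[ℝ] V k)) (p : ℝ) (K Kd H Hd : ℝ → V k) : ℝ :=
  work G G' (prolong p K H) (prolong p Kd Hd) - work G G' H Hd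

/-- The relaxed work `w^r_{H'}(H)` from the differentiable history `H'`
(with derivative `H'd`) to the history `H`. -/
def relaxedWork {k : ℕ} (G G' : ℝ → (V k →L[ℝ] V k)) (H' H'd H : ℝ → V k) : EReal :=
  sInf { c : EReal | ∃ K Kd : ℝ → ℝ → V k,
    (∀ p : ℝ, 0 < p → IsDiffProcess p (K p) (Kd p) ∧ Prolongs p (K p) H') ∧
    Tendsto (fun p => hdist G' (prolong p (K p) H') H) atTop (𝓝 0) ∧
    c = Filter.liminf (fun p => ((workP G G' p (K p) (Kd p) H' H'd : ℝ) : EReal)) atTop }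

/-- `H` is `w`-approachable from `H'`: there is a family of processes prolonging `H'`
approaching `H` in the distance `d`, along which the work converges. -/
def WApproachable {k : ℕ} (G G' : ℝ → (V k →L[ℝ] V k)) (H' H'd H : ℝ → V k) : Prop :=
  ∃ K Kd : ℝ → ℝ → V k, ∃ L : ℝ,
    (∀ p : ℝ, 0 < p → IsDiffProcess p (K p) (Kd p) ∧ Prolongs p (K p) H') ∧
    Tendsto (fun p => hdist G' (prolong p (K p) H') H) atTop (𝓝 0) ∧
    Tendsto (fun p => workP G G' p (K p) (Kd p) H' H'd) atTop (𝓝 L)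

/-- `Q(v) := ½⟨G(∞)v, v⟩`. -/
def Qform {k : ℕ} (Ginf : V k →L[ℝ] V k) (v : V k) : ℝ := (1/2) * vinner (Ginf v) v

/-- The relaxation function is dissipative: `w(H) ≥ 0` for every differentiable
history with `H(∞) = 0`. -/
def DissipativeRelax {k : ℕ} (G G' : ℝ → (V k →L[ℝ] V k)) : Prop :=
  ∀ H Hd : ℝ → V k, IsDiffHistory H Hd → Tendsto H atTop (𝓝 (0 : V k)) →
    0 ≤ work G G' H Hd

/-- `w` satisfies the dissipation property along the history `H`. -/
def DissipationProperty {k : ℕ} (G G' : ℝ → (V k →L[ℝ] V k)) (H Hd : ℝ → V k) : Prop :=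
  ∀ ε : ℝ, 0 < ε → ∃ δ : ℝ, 0 < δ ∧
    ∀ p : ℝ, ∀ K Kd : ℝ → V k, IsDiffProcess p K Kd → Prolongs p K H →
      hdist G' (prolong p K H) H < ENNReal.ofReal δ → -ε < workP G G' p K Kd H Hd

/-- A free energy (lower potential for the work `w`). -/
def IsFreeEnergy {k : ℕ} (G G' : ℝ → (V k →L[ℝ] V k)) (ψ : (ℝ → V k) → EReal) : Prop :=
  ∀ H Hd H' H'd : ℝ → V k, IsDiffHistory H Hd → IsDiffHistory H' H'd →
    ∀ ε : ℝ, 0 < ε → ∃ δ : ℝ, 0 < δ ∧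
      ∀ p : ℝ, ∀ K Kd : ℝ → V k, IsDiffProcess p K Kd → Prolongs p K H' →
        hdist G' (prolong p K H') H < ENNReal.ofReal δ →
        ψ H - ψ H' < ((workP G G' p K Kd H' H'd + ε : ℝ) : EReal)
section AuxLemmas

variable {k : ℕ}

lemma vnorm_nonneg (v : V k) : 0 ≤ vnorm v := by
  unfold vnorm; positivity

lemma vnorm_zero : vnorm (0 : V k) = 0 := by simp [vnorm]

lemma norm_le_vnorm (v : V k) : ‖v‖ ≤ vnorm v := by
  have h1 := norm_nonneg v.1
  have h2 := norm_nonneg v.2.1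
  have h3 := norm_nonneg v.2.2
  rw [Prod.norm_def, Prod.norm_def]
  unfold vnorm
  exact max_le (by linarith) (max_le (by linarith) (by linarith))

lemma vnorm_add_le (a b : V k) : vnorm (a + b) ≤ vnorm a + vnorm b := by
  have h1 := norm_add_le a.1 b.1
  have h2 := norm_add_le a.2.1 b.2.1
  have h3 := norm_add_le a.2.2 b.2.2
  unfold vnorm
  simp only [Prod.fst_add, Prod.snd_add]
  linarith

lemma continuous_vnorm : Continuous (vnorm (k := k)) := by
  unfold vnorm; fun_prop

lemma eventually_one_div_lt {u : ℝ} (hu : 0 < u) :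
    ∀ᶠ n : ℕ in atTop, 1 / ((n : ℝ) + 1) < u :=
  tendsto_one_div_add_atTop_nhds_zero_nat.eventually (gt_mem_nhds hu)

/-- A right-continuous function, pre-composed with `max · 0`, is strongly measurable. -/
lemma stronglyMeasurable_max0 (H : ℝ → V k)
    (hr : ∀ s : ℝ, 0 ≤ s → ContinuousWithinAt H (Set.Ici s) s) :
    StronglyMeasurable (fun s => H (max s 0)) := by
  have hmeas : ∀ n : ℕ, StronglyMeasurable
      (fun s : ℝ => H (((⌊max s 0 * ((n : ℝ) + 1)⌋ : ℝ) + 1) / ((n : ℝ) + 1))) := by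
    intro n
    have h1 : Measurable (fun s : ℝ => ⌊max s 0 * ((n : ℝ) + 1)⌋) :=
      ((measurable_id.max measurable_const).mul_const _).floor
    exact ((measurable_from_top
      (f := fun m : ℤ => H (((m : ℝ) + 1) / ((n : ℝ) + 1)))).comp h1).stronglyMeasurable
  refine stronglyMeasurable_of_tendsto atTop hmeas ?_
  rw [tendsto_pi_nhds]
  intro s
  set x := max s 0 with hxdef
  have hx0 : (0 : ℝ) ≤ x := le_max_right _ _
  have hlo : ∀ n : ℕ, x ≤ ((⌊x * ((n : ℝ) + 1)⌋ : ℝ) + 1) / ((n : ℝ) + 1) := by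
    intro n
    have hc : (0 : ℝ) < (n : ℝ) + 1 := by positivity
    rw [le_div_iff₀ hc]
    exact (Int.lt_floor_add_one (x * ((n : ℝ) + 1))).le
  have hup : ∀ n : ℕ, ((⌊x * ((n : ℝ) + 1)⌋ : ℝ) + 1) / ((n : ℝ) + 1) ≤ x + 1 / ((n : ℝ) + 1) := by
    intro n
    have hc : (0 : ℝ) < (n : ℝ) + 1 := by positivity
    rw [div_le_iff₀ hc]
    have := Int.floor_le (x * ((n : ℝ) + 1))
    have hexp : (x + 1 / ((n : ℝ) + 1)) * ((n : ℝ) + 1) = x * ((n : ℝ) + 1) + 1 := by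
      field_simp
    rw [hexp]
    linarith
  have key : Tendsto (fun n : ℕ => ((⌊x * ((n : ℝ) + 1)⌋ : ℝ) + 1) / ((n : ℝ) + 1)) atTop
      (𝓝[Set.Ici x] x) := by
    apply tendsto_nhdsWithin_of_tendsto_nhds_of_eventually_within
    · refine tendsto_of_tendsto_of_tendsto_of_le_of_le tendsto_const_nhds ?_ hlo hup
      have := tendsto_const_nhds (x := x) (f := atTop (α := ℕ)).add
        tendsto_one_div_add_atTop_nhds_zero_nat
      simpa using this
    · exact Filter.Eventually.of_forall fun n => hlo n
  exact (hr x hx0).tendsto.comp key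

/-- Almost everywhere on `(0,∞)`, `H(u - 1/(n+1)) → H(u)` for a history `H`. -/
lemma ae_tendsto_left (H : ℝ → V k) (hH : IsHistory H) :
    ∀ᵐ u ∂(volume.restrict (Set.Ioi (0 : ℝ))),
      Tendsto (fun n : ℕ => H (u - 1 / ((n : ℝ) + 1))) atTop (𝓝 (H u)) := by
  classical
  set v : ℝ → ℝ := fun x => (eVariationOn H (Set.Ici 0 ∩ Set.Icc 0 x)).toReal with hvdef
  have hfin : ∀ x : ℝ, eVariationOn H (Set.Ici 0 ∩ Set.Icc 0 x) ≠ ⊤ :=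
    fun x => ne_top_of_le_ne_top hH.bv (eVariationOn.mono H Set.inter_subset_left)
  have hfin2 : ∀ a b : ℝ, eVariationOn H (Set.Ici 0 ∩ Set.Icc a b) ≠ ⊤ :=
    fun a b => ne_top_of_le_ne_top hH.bv (eVariationOn.mono H Set.inter_subset_left)
  have hmono : Monotone v := by
    intro a b hab
    exact ENNReal.toReal_mono (hfin b)
      (eVariationOn.mono H (Set.inter_subset_inter_right _ (Set.Icc_subset_Icc_right hab)))
  have key : ∀ a b : ℝ, 0 ≤ a → a ≤ b → dist (H a) (H b) ≤ v b - v a := by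
    intro a b ha hab
    have hsum := eVariationOn.Icc_add_Icc H (s := Set.Ici 0) (a := 0) (b := a) (c := b)
      ha hab ha
    have hed : edist (H a) (H b) ≤ eVariationOn H (Set.Ici 0 ∩ Set.Icc a b) :=
      eVariationOn.edist_le H ⟨ha, le_rfl, hab⟩ ⟨le_trans ha hab, hab, le_rfl⟩
    have h1 : v a + (eVariationOn H (Set.Ici 0 ∩ Set.Icc a b)).toReal = v b := by
      rw [hvdef]
      dsimp only
      rw [← ENNReal.toReal_add (hfin a) (hfin2 a b), hsum]
    have h2 : dist (H a) (H b) ≤ (eVariationOn H (Set.Ici 0 ∩ Set.Icc a b)).toReal := by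
      rw [dist_edist]
      exact ENNReal.toReal_mono (hfin2 a b) hed
    linarith
  have h1 : ∀ᵐ x : ℝ, ContinuousAt v x :=
    ae_iff.mpr (hmono.countable_not_continuousAt.measure_zero _)
  filter_upwards [ae_restrict_of_ae h1, ae_restrict_mem measurableSet_Ioi] with u hcont hu
  have hu0 : (0 : ℝ) < u := hu
  rw [tendsto_iff_dist_tendsto_zero]
  have hvt : Tendsto (fun n : ℕ => v (u - 1 / ((n : ℝ) + 1))) atTop (𝓝 (v u)) := by
    refine hcont.tendsto.comp ?_
    have := tendsto_const_nhds (x := u) (f := atTop (α := ℕ)).sub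
      tendsto_one_div_add_atTop_nhds_zero_nat
    simpa using this
  have hev : ∀ᶠ n : ℕ in atTop,
      dist (H (u - 1 / ((n : ℝ) + 1))) (H u) ≤ v u - v (u - 1 / ((n : ℝ) + 1)) := by
    filter_upwards [eventually_one_div_lt hu0] with n hn
    have h1n : (0 : ℝ) < 1 / ((n : ℝ) + 1) := by positivity
    exact key _ u (by linarith) (by linarith)
  refine squeeze_zero' (Filter.Eventually.of_forall fun n => dist_nonneg) hev ?_
  have := tendsto_const_nhds (x := v u) (f := atTop (α := ℕ)).sub hvt
  simpa using this

end AuxLemmas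
section AuxLemmas2

variable {k : ℕ}

/-- Dominated convergence for integrals of the form `∫ G'(s) (F n s)`. -/
lemma tendsto_integral_apply (G' : ℝ → (V k →L[ℝ] V k)) (hG' : IntegrableOn G' (Set.Ici 0))
    (F : ℕ → ℝ → V k) (Flim : ℝ → V k)
    (hFm : ∀ n, AEStronglyMeasurable (F n) (volume.restrict (Set.Ioi 0)))
    (C : ℝ) (hC : ∀ n s, ‖F n s‖ ≤ C)
    (hconv : ∀ᵐ s ∂(volume.restrict (Set.Ioi (0 : ℝ))),
      Tendsto (fun n => F n s) atTop (𝓝 (Flim s))) :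
    Tendsto (fun n => ∫ s in Set.Ioi (0 : ℝ), G' s (F n s)) atTop
      (𝓝 (∫ s in Set.Ioi (0 : ℝ), G' s (Flim s))) := by
  have hG'0 : IntegrableOn G' (Set.Ioi 0) := hG'.mono_set Set.Ioi_subset_Ici_self
  apply tendsto_integral_of_dominated_convergence (fun s => ‖G' s‖ * C)
  · intro n
    exact (isBoundedBilinearMap_apply.continuous).comp_aestronglyMeasurable
      (AEStronglyMeasurable.prodMk hG'0.aestronglyMeasurable (hFm n))
  · exact hG'0.norm.mul_const C
  · intro n
    filter_upwards with s
    exact le_trans ((G' s).le_opNorm _) (mul_le_mul_of_nonneg_left (hC n s) (norm_nonneg _))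
  · filter_upwards [hconv] with s hs
    exact ((G' s).continuous.tendsto _).comp hs

/-- Integrability of `s ↦ G'(s) (F s)` for bounded measurable `F`. -/
lemma integrable_apply (G' : ℝ → (V k →L[ℝ] V k)) (hG' : IntegrableOn G' (Set.Ici 0))
    (F : ℝ → V k) (hFm : AEStronglyMeasurable F (volume.restrict (Set.Ioi 0)))
    (C : ℝ) (hC : ∀ s, ‖F s‖ ≤ C) :
    IntegrableOn (fun s => G' s (F s)) (Set.Ioi (0 : ℝ)) := by
  have hG'0 : IntegrableOn G' (Set.Ioi 0) := hG'.mono_set Set.Ioi_subset_Ici_self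
  refine Integrable.mono' (hG'0.norm.mul_const C) ?_ ?_
  · exact (isBoundedBilinearMap_apply.continuous).comp_aestronglyMeasurable
      (AEStronglyMeasurable.prodMk hG'0.aestronglyMeasurable hFm)
  · filter_upwards with s
    exact le_trans ((G' s).le_opNorm _) (mul_le_mul_of_nonneg_left (hC s) (norm_nonneg _))

/-- Change of variables for the shifted integral. -/
lemma shift_integral (G' : ℝ → (V k →L[ℝ] V k)) (F : ℝ → V k) {t : ℝ} (ht : 0 < t) :
    ∫ s in Set.Ioi (0 : ℝ), G' (s + t) (F s)
      = ∫ u in Set.Ioi (0 : ℝ), G' u ((Set.Ioi t).indicator (fun u => F (u - t)) u) := by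
  have h2 : ∀ s : ℝ, (Set.Ioi (0 : ℝ)).indicator (fun s => G' (s + t) (F s)) s
      = (Set.Ioi t).indicator (fun u => G' u (F (u - t))) (s + t) := by
    intro s
    by_cases hs : s ∈ Set.Ioi (0 : ℝ)
    · rw [Set.indicator_of_mem hs, Set.indicator_of_mem (by simpa using hs)]
      simp
    · rw [Set.indicator_of_notMem hs, Set.indicator_of_notMem (by simpa using hs)]
  have h3 : ∀ u : ℝ, G' u ((Set.Ioi t).indicator (fun u => F (u - t)) u)
      = (Set.Ioi t).indicator (fun u => G' u (F (u - t))) u := by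
    intro u
    by_cases hu : u ∈ Set.Ioi t
    · rw [Set.indicator_of_mem hu, Set.indicator_of_mem hu]
    · rw [Set.indicator_of_notMem hu, Set.indicator_of_notMem hu, map_zero]
  calc ∫ s in Set.Ioi (0 : ℝ), G' (s + t) (F s)
      = ∫ s : ℝ, (Set.Ioi (0 : ℝ)).indicator (fun s => G' (s + t) (F s)) s :=
        (integral_indicator measurableSet_Ioi).symm
    _ = ∫ s : ℝ, (Set.Ioi t).indicator (fun u => G' u (F (u - t))) (s + t) := by
        simp_rw [h2]
    _ = ∫ u : ℝ, (Set.Ioi t).indicator (fun u => G' u (F (u - t))) u :=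
        integral_add_right_eq_self _ t
    _ = ∫ u in Set.Ioi t, G' u (F (u - t)) := integral_indicator measurableSet_Ioi
    _ = ∫ u in Set.Ioi 0 ∩ Set.Ioi t, G' u (F (u - t)) := by
        rw [Set.inter_eq_right.mpr (Set.Ioi_subset_Ioi ht.le)]
    _ = ∫ u in Set.Ioi (0 : ℝ), (Set.Ioi t).indicator (fun u => G' u (F (u - t))) u :=
        (setIntegral_indicator measurableSet_Ioi).symm
    _ = ∫ u in Set.Ioi (0 : ℝ), G' u ((Set.Ioi t).indicator (fun u => F (u - t)) u) := by
        simp_rw [h3]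

end AuxLemmas2
/-- `‖Λ(H) − Λ(H')‖ ≤ d(H,H') + ‖G(0)(H(0) − H'(0))‖`; consequently,
if `d(H,H') = 0` and `H(0) = H'(0)` — in particular if `H` and `H'` are equivalent —
then the stress, the self-action and the microstress (the three block components of
the response) coincide on `H` and `H'`. -/
theorem response_estimate_and_state {k : ℕ} (G G' : ℝ → (V k →L[ℝ] V k))
    (hG : IsRelaxation G G') (H H' : ℝ → V k)
    (hH : IsHistory H) (hH' : IsHistory H') :
    (ENNReal.ofReal (vnorm (response G G' H - response G G' H')) ≤
      hdist G' H H' + ENNReal.ofReal (vnorm ((G 0) (H 0 - H' 0)))) ∧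
    (hdist G' H H' = 0 → H 0 = H' 0 →
      (response G G' H).1 = (response G G' H').1 ∧
      (response G G' H).2.1 = (response G G' H').2.1 ∧
      (response G G' H).2.2 = (response G G' H').2.2) ∧
    (EquivHist G G' H H' →
      (response G G' H).1 = (response G G' H').1 ∧
      (response G G' H).2.1 = (response G G' H').2.1 ∧
      (response G G' H).2.2 = (response G G' H').2.2) := by
  classical
  obtain ⟨CH, hCH⟩ := hH.bounded
  obtain ⟨CH', hCH'⟩ := hH'.bounded
  set Hp : ℝ → V k := fun s => H (max s 0) with hHp
  set H'p : ℝ → V k := fun s => H' (max s 0) with hH'p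
  have smH : StronglyMeasurable Hp := stronglyMeasurable_max0 H hH.rightCont
  have smH' : StronglyMeasurable H'p := stronglyMeasurable_max0 H' hH'.rightCont
  have hbH : ∀ s, ‖Hp s‖ ≤ CH := fun s => (norm_le_vnorm _).trans (hCH _ (le_max_right _ _))
  have hbH' : ∀ s, ‖H'p s‖ ≤ CH' := fun s => (norm_le_vnorm _).trans (hCH' _ (le_max_right _ _))
  have IH : IntegrableOn (fun s => G' s (Hp s)) (Set.Ioi 0) :=
    integrable_apply G' hG.integrable Hp smH.aestronglyMeasurable CH hbH
  have IH' : IntegrableOn (fun s => G' s (H'p s)) (Set.Ioi 0) :=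
    integrable_apply G' hG.integrable H'p smH'.aestronglyMeasurable CH' hbH'
  set D : V k := ∫ s in Set.Ioi (0:ℝ), G' s (Hp s - H'p s) with hD
  have hDsub : D = (∫ s in Set.Ioi (0:ℝ), G' s (Hp s)) - ∫ s in Set.Ioi (0:ℝ), G' s (H'p s) := by
    rw [hD]
    simp_rw [map_sub]
    exact integral_sub IH IH'
  have hcongrH : ∫ s in Set.Ioi (0:ℝ), G' s (H s) = ∫ s in Set.Ioi (0:ℝ), G' s (Hp s) :=
    setIntegral_congr_fun measurableSet_Ioi (fun s hs => by
      rw [hHp]; dsimp only; rw [max_eq_left (le_of_lt hs)])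
  have hcongrH' : ∫ s in Set.Ioi (0:ℝ), G' s (H' s) = ∫ s in Set.Ioi (0:ℝ), G' s (H'p s) :=
    setIntegral_congr_fun measurableSet_Ioi (fun s hs => by
      rw [hH'p]; dsimp only; rw [max_eq_left (le_of_lt hs)])
  have hdiffeq : response G G' H - response G G' H' = (G 0) (H 0 - H' 0) + D := by
    unfold response
    rw [hcongrH, hcongrH', hDsub, map_sub]
    abel
  set Fm : ℕ → ℝ → V k := fun n =>
    (Set.Ioi (1/((n:ℝ)+1))).indicator
      (fun u => Hp (u - 1/((n:ℝ)+1)) - H'p (u - 1/((n:ℝ)+1))) with hFm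
  have hInt_eq : ∀ n : ℕ, (∫ s in Set.Ioi (0:ℝ), G' (s + 1/((n:ℝ)+1)) (H s - H' s))
      = ∫ u in Set.Ioi (0:ℝ), G' u (Fm n u) := by
    intro n
    have e1 : (∫ s in Set.Ioi (0:ℝ), G' (s + 1/((n:ℝ)+1)) (H s - H' s))
        = ∫ s in Set.Ioi (0:ℝ), G' (s + 1/((n:ℝ)+1)) (Hp s - H'p s) :=
      setIntegral_congr_fun measurableSet_Ioi (fun s hs => by
        rw [hHp, hH'p]; dsimp only; rw [max_eq_left (le_of_lt hs)])
    rw [e1, shift_integral G' _ (by positivity : (0:ℝ) < 1/((n:ℝ)+1)), hFm]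
  have hconv : Tendsto (fun n => ∫ u in Set.Ioi (0:ℝ), G' u (Fm n u)) atTop (𝓝 D) := by
    rw [hD]
    refine tendsto_integral_apply G' hG.integrable Fm _ ?_ (CH + CH') ?_ ?_
    · intro n
      exact (((smH.comp_measurable (measurable_id.sub_const _)).sub
        (smH'.comp_measurable (measurable_id.sub_const _))).indicator
        measurableSet_Ioi).aestronglyMeasurable
    · intro n u
      rw [hFm]
      refine le_trans (norm_indicator_le_norm_self _ _) ?_
      exact le_trans (norm_sub_le _ _) (add_le_add (hbH _) (hbH' _))
    · filter_upwards [ae_tendsto_left H hH, ae_tendsto_left H' hH',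
        ae_restrict_mem measurableSet_Ioi] with u h1 h2 hu
      have hu0 : (0:ℝ) < u := hu
      have target_eq : Hp u - H'p u = H u - H' u := by
        rw [hHp, hH'p]; dsimp only; rw [max_eq_left hu0.le]
      rw [target_eq]
      refine Filter.Tendsto.congr' ?_ (h1.sub h2)
      filter_upwards [eventually_one_div_lt hu0] with n hn
      have h1n : (0:ℝ) < 1/((n:ℝ)+1) := by positivity
      rw [hFm]
      dsimp only
      rw [Set.indicator_of_mem (Set.mem_Ioi.mpr hn), hHp, hH'p]
      dsimp only
      rw [max_eq_left (by linarith : (0:ℝ) ≤ u - 1/((n:ℝ)+1))]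
  have hDle : ENNReal.ofReal (vnorm D) ≤ hdist G' H H' := by
    by_cases hT : hdist G' H H' = ⊤
    · rw [hT]; exact le_top
    · have hb : ∀ n : ℕ, vnorm (∫ u in Set.Ioi (0:ℝ), G' u (Fm n u))
          ≤ (hdist G' H H').toReal := by
        intro n
        rw [← hInt_eq n]
        refine (ENNReal.ofReal_le_iff_le_toReal hT).mp ?_
        exact le_iSup (fun t : Set.Ioi (0:ℝ) => ENNReal.ofReal
          (vnorm (∫ s in Set.Ioi (0:ℝ), G' (s + (t:ℝ)) (H s - H' s))))
          ⟨1/((n:ℝ)+1), Set.mem_Ioi.mpr (by positivity)⟩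
      have hlim : Tendsto (fun n => vnorm (∫ u in Set.Ioi (0:ℝ), G' u (Fm n u))) atTop
          (𝓝 (vnorm D)) := (continuous_vnorm.tendsto D).comp hconv
      calc ENNReal.ofReal (vnorm D)
          ≤ ENNReal.ofReal (hdist G' H H').toReal :=
            ENNReal.ofReal_le_ofReal (le_of_tendsto hlim (Filter.Eventually.of_forall hb))
        _ = hdist G' H H' := ENNReal.ofReal_toReal hT
  have part1 : ENNReal.ofReal (vnorm (response G G' H - response G G' H')) ≤
      hdist G' H H' + ENNReal.ofReal (vnorm ((G 0) (H 0 - H' 0))) := by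
    rw [hdiffeq]
    calc ENNReal.ofReal (vnorm ((G 0) (H 0 - H' 0) + D))
        ≤ ENNReal.ofReal (vnorm ((G 0) (H 0 - H' 0)) + vnorm D) :=
          ENNReal.ofReal_le_ofReal (vnorm_add_le _ _)
      _ = ENNReal.ofReal (vnorm ((G 0) (H 0 - H' 0))) + ENNReal.ofReal (vnorm D) :=
          ENNReal.ofReal_add (vnorm_nonneg _) (vnorm_nonneg _)
      _ ≤ ENNReal.ofReal (vnorm ((G 0) (H 0 - H' 0))) + hdist G' H H' :=
          add_le_add le_rfl hDle
      _ = hdist G' H H' + ENNReal.ofReal (vnorm ((G 0) (H 0 - H' 0))) := add_comm _ _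
  have part2 : hdist G' H H' = 0 → H 0 = H' 0 →
      (response G G' H).1 = (response G G' H').1 ∧
      (response G G' H).2.1 = (response G G' H').2.1 ∧
      (response G G' H).2.2 = (response G G' H').2.2 := by
    intro hd h0
    have h1 : ENNReal.ofReal (vnorm (response G G' H - response G G' H')) ≤ 0 := by
      have := part1
      simp only [hd, h0, sub_self, map_zero, vnorm_zero, ENNReal.ofReal_zero, zero_add,
        add_zero] at this
      exact this
    have h2 : vnorm (response G G' H - response G G' H') ≤ 0 :=
      ENNReal.ofReal_eq_zero.mp (le_antisymm h1 zero_le)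
    have e1 : ‖(response G G' H - response G G' H').1‖
        + ‖(response G G' H - response G G' H').2.1‖
        + ‖(response G G' H - response G G' H').2.2‖ ≤ 0 := h2
    have n1 := norm_nonneg (response G G' H - response G G' H').1
    have n2 := norm_nonneg (response G G' H - response G G' H').2.1
    have n3 := norm_nonneg (response G G' H - response G G' H').2.2
    refine ⟨sub_eq_zero.mp ?_, sub_eq_zero.mp ?_, sub_eq_zero.mp ?_⟩
    · exact norm_le_zero_iff.mp (by linarith :
        ‖(response G G' H - response G G' H').1‖ ≤ 0)
    · exact norm_le_zero_iff.mp (by linarith :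
        ‖(response G G' H - response G G' H').2.1‖ ≤ 0)
    · exact norm_le_zero_iff.mp (by linarith :
        ‖(response G G' H - response G G' H').2.2‖ ≤ 0)
  refine ⟨part1, part2, ?_⟩
  rintro ⟨h0, hresp⟩
  set K : ℝ → V k := fun _ => H 0 with hK
  have keylim : ∀ (X : ℝ → V k) (CX : ℝ), IsHistory X →
      (∀ s, 0 ≤ s → vnorm (X s) ≤ CX) → X 0 = H 0 →
      Tendsto (fun n : ℕ => response G G' (prolong (1/((n:ℝ)+1)) K X)) atTop
        (𝓝 (response G G' X)) := by
    intro X CX hX hCX hX0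
    set Xp : ℝ → V k := fun s => X (max s 0) with hXp
    have smX : StronglyMeasurable Xp := stronglyMeasurable_max0 X hX.rightCont
    have hbX : ∀ s, ‖Xp s‖ ≤ CX := fun s => (norm_le_vnorm _).trans (hCX _ (le_max_right _ _))
    set Y : ℝ → ℝ → V k :=
      fun p => (Set.Iio p).piecewise (fun _ => H 0) (fun s => Xp (s - p)) with hY
    have hYval : ∀ p s : ℝ, Y p s = if s < p then H 0 else Xp (s - p) := by
      intro p s
      rw [hY]
      by_cases hsp : s < p <;> simp [Set.piecewise, hsp]
    have hrp : ∀ p : ℝ, 0 < p →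
        response G G' (prolong p K X) = (G 0) (H 0) + ∫ s in Set.Ioi (0:ℝ), G' s (Y p s) := by
      intro p hp
      unfold response prolong
      congr 1
      · rw [if_pos hp]
      · refine setIntegral_congr_fun measurableSet_Ioi fun s _ => ?_
        rw [hYval]
        congr 1
        by_cases hsp : s < p
        · rw [if_pos hsp, if_pos hsp, hK]
        · rw [if_neg hsp, if_neg hsp, hXp]
          dsimp only
          rw [max_eq_left (by linarith [not_lt.mp hsp] : (0:ℝ) ≤ s - p)]
    have hrX : response G G' X = (G 0) (H 0) + ∫ s in Set.Ioi (0:ℝ), G' s (Xp s) := by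
      unfold response
      rw [hX0]
      congr 1
      exact setIntegral_congr_fun measurableSet_Ioi fun s hs => by
        rw [hXp]; dsimp only; rw [max_eq_left (le_of_lt hs)]
    have hint : Tendsto (fun n : ℕ => ∫ s in Set.Ioi (0:ℝ), G' s (Y (1/((n:ℝ)+1)) s)) atTop
        (𝓝 (∫ s in Set.Ioi (0:ℝ), G' s (Xp s))) := by
      refine tendsto_integral_apply G' hG.integrable _ _ ?_ (‖H 0‖ + CX) ?_ ?_
      · intro n
        exact (stronglyMeasurable_const.piecewise measurableSet_Iio
          (smX.comp_measurable (measurable_id.sub_const _))).aestronglyMeasurable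
      · intro n s
        rw [hYval]
        by_cases hs : s < 1/((n:ℝ)+1)
        · rw [if_pos hs]
          linarith [norm_nonneg (Xp 0), hbX 0]
        · rw [if_neg hs]
          linarith [hbX (s - 1/((n:ℝ)+1)), norm_nonneg (H 0)]
      · filter_upwards [ae_tendsto_left X hX, ae_restrict_mem measurableSet_Ioi] with u h1 hu
        have hu0 : (0:ℝ) < u := hu
        have target_eq : Xp u = X u := by
          rw [hXp]; dsimp only; rw [max_eq_left hu0.le]
        rw [target_eq]
        refine Filter.Tendsto.congr' ?_ h1
        filter_upwards [eventually_one_div_lt hu0] with n hn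
        rw [hYval, if_neg (not_lt.mpr hn.le), hXp]
        dsimp only
        rw [max_eq_left (by linarith : (0:ℝ) ≤ u - 1/((n:ℝ)+1))]
    have hfin := hint.const_add ((G 0) (H 0))
    rw [hrX]
    refine Filter.Tendsto.congr (fun n => (hrp _ (by positivity)).symm) hfin
  have hPro : ∀ p : ℝ, Prolongs p K H := fun p => tendsto_const_nhds
  have hchain : ∀ n : ℕ, response G G' (prolong (1/((n:ℝ)+1)) K H)
      = response G G' (prolong (1/((n:ℝ)+1)) K H') :=
    fun n => hresp _ (by positivity) K (hPro _)
  have hre : response G G' H = response G G' H' :=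
    tendsto_nhds_unique (Filter.Tendsto.congr hchain (keylim H CH hH hCH rfl))
      (keylim H' CH' hH' hCH' h0.symm)
  exact ⟨by rw [hre], by rw [hre], by rw [hre]⟩
end
end

section
/- (Contraction) For every process K_p of duration p > 0 and all histories H, H' with H(0) = H'(0) = lim_{s↗p} K_p(s), one has d(K_p∗H, K_p∗H') ≤ d(H,H'). -/
open MeasureTheory Filter Topology
open scoped ENNReal Classical

noncomputable section

/-- Contraction: for every process `K` of duration `p > 0` and all
histories `H, H'` with `H(0) = H'(0) = lim_{s↗p} K(s)`,
`d(K∗H, K∗H') ≤ d(H,H')`. -/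
theorem hdist_contraction {k : ℕ} (G G' : ℝ → (V k →L[ℝ] V k))
    (hG : IsRelaxation G G') (p : ℝ) (hp : 0 < p) (K : ℝ → V k)
    (H H' : ℝ → V k) (hH : IsHistory H) (hH' : IsHistory H')
    (h0 : H 0 = H' 0) (hK : Prolongs p K H) :
    hdist G' (prolong p K H) (prolong p K H') ≤ hdist G' H H' := by
  unfold hdist
  apply iSup_le
  rintro ⟨t, ht⟩
  simp only [Set.mem_Ioi] at ht
  have key : (∫ s in Set.Ioi (0:ℝ), (G' (s + t)) (prolong p K H s - prolong p K H' s))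
      = ∫ s in Set.Ioi (0:ℝ), (G' (s + (t + p))) (H s - H' s) := by
    rw [← integral_indicator measurableSet_Ioi, ← integral_indicator measurableSet_Ioi]
    have heq : (Set.Ioi (0:ℝ)).indicator
          (fun s => (G' (s + t)) (prolong p K H s - prolong p K H' s))
        = fun s => (Set.Ioi (0:ℝ)).indicator
          (fun u => (G' (u + (t + p))) (H u - H' u)) (s - p) := by
      funext s
      rcases lt_trichotomy s p with hs | hs | hs
      · have h1 : ¬ (0:ℝ) < s - p := by linarith
        by_cases h2 : (0:ℝ) < s
        · simp only [Set.indicator, Set.mem_Ioi, h1, h2, if_true, if_false, prolong,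
            if_pos hs, sub_self, map_zero]
        · simp only [Set.indicator, Set.mem_Ioi, h1, h2, if_false]
      · subst hs
        have h1 : ¬ (0:ℝ) < s - s := by simp
        simp only [Set.indicator, Set.mem_Ioi, hp, h1, if_true, if_false, prolong,
          lt_irrefl, sub_self, h0, map_zero]
      · have h1 : (0:ℝ) < s - p := by linarith
        have h2 : (0:ℝ) < s := lt_trans hp hs
        have h3 : ¬ s < p := not_lt.mpr hs.le
        have h4 : s - p + (t + p) = s + t := by ring
        simp only [Set.indicator, Set.mem_Ioi, h1, h2, if_true, prolong, h3, if_false, h4]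
    rw [heq, integral_sub_right_eq_self]
  rw [key]
  exact le_iSup_of_le ⟨t + p, by simp [Set.mem_Ioi]; linarith⟩ le_rfl
end
end

section
/- (Fading memory) If ‖H(s)‖ ≤ M and ‖H'(s)‖ ≤ M for all s ≥ 0, then for every p > 0 and every process K_p of duration p prolonging both H and H', d(K_p∗H, K_p∗H') ≤ 2M ∫_p^∞ ‖Ġ(s)‖_op ds. In particular, for every ε > 0 there exists r > 0 such that d(K_p∗H, K_p∗H') < ε for every p > r and every such process K_p. -/
open MeasureTheory Filter Topology
open scoped ENNReal Classical

noncomputable section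

namespace FadingAux

variable {k : ℕ}

lemma vnorm_nonneg (v : V k) : 0 ≤ vnorm v := by
  unfold vnorm; positivity

lemma vnorm_zero : vnorm (0 : V k) = 0 := by simp [vnorm]

lemma vnorm_add_le (v w : V k) : vnorm (v + w) ≤ vnorm v + vnorm w := by
  simp only [vnorm, Prod.fst_add, Prod.snd_add]
  have h1 := norm_add_le v.1 w.1
  have h2 := norm_add_le v.2.1 w.2.1
  have h3 := norm_add_le v.2.2 w.2.2
  linarith

lemma vnorm_sub_le (v w : V k) : vnorm (v - w) ≤ vnorm v + vnorm w := by
  simp only [vnorm, Prod.fst_sub, Prod.snd_sub]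
  have h1 := norm_sub_le v.1 w.1
  have h2 := norm_sub_le v.2.1 w.2.1
  have h3 := norm_sub_le v.2.2 w.2.2
  linarith

lemma vnorm_smul (c : ℝ) (v : V k) : vnorm (c • v) = |c| * vnorm v := by
  simp only [vnorm, Prod.smul_fst, Prod.smul_snd, norm_smul, Real.norm_eq_abs]
  ring

lemma norm_le_vnorm (v : V k) : ‖v‖ ≤ vnorm v := by
  have h : ‖v‖ = max ‖v.1‖ (max ‖v.2.1‖ ‖v.2.2‖) := by
    rw [Prod.norm_def, Prod.norm_def]
  rw [h]
  unfold vnorm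
  have := norm_nonneg v.1
  have := norm_nonneg v.2.1
  have := norm_nonneg v.2.2
  simp only [max_le_iff]
  constructor
  · linarith
  constructor <;> linarith

lemma vnorm_le_three (v : V k) : vnorm v ≤ 3 * ‖v‖ := by
  have h1 : ‖v.1‖ ≤ ‖v‖ := norm_fst_le v
  have h2 : ‖v.2‖ ≤ ‖v‖ := norm_snd_le v
  have h3 : ‖v.2.1‖ ≤ ‖v.2‖ := norm_fst_le v.2
  have h4 : ‖v.2.2‖ ≤ ‖v.2‖ := norm_snd_le v.2
  unfold vnorm
  linarith

lemma vnorm_eq_zero {v : V k} (h : vnorm v = 0) : v = 0 := by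
  simp only [vnorm] at h
  have h1 := norm_nonneg v.1
  have h2 := norm_nonneg v.2.1
  have h3 := norm_nonneg v.2.2
  have e1 : ‖v.1‖ = 0 := by linarith
  have e2 : ‖v.2.1‖ = 0 := by linarith
  have e3 : ‖v.2.2‖ = 0 := by linarith
  rw [norm_eq_zero] at e1 e2 e3
  exact Prod.ext e1 (Prod.ext e2 e3)

lemma opnorm_bddAbove (A : V k →L[ℝ] V k) :
    BddAbove ((fun v => vnorm (A v)) '' {v : V k | vnorm v ≤ 1}) := by
  refine ⟨3 * ‖A‖, ?_⟩
  rintro x ⟨v, hv, rfl⟩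
  simp only [Set.mem_setOf_eq] at hv
  have h1 : vnorm (A v) ≤ 3 * ‖A v‖ := vnorm_le_three _
  have h2 : ‖A v‖ ≤ ‖A‖ * ‖v‖ := A.le_opNorm v
  have h3 : ‖v‖ ≤ vnorm v := norm_le_vnorm v
  have h4 : (0:ℝ) ≤ ‖A‖ := norm_nonneg A
  nlinarith

lemma opnorm_nonneg (A : V k →L[ℝ] V k) : 0 ≤ opnorm A := by
  apply Real.sSup_nonneg
  rintro x ⟨v, _, rfl⟩
  exact vnorm_nonneg _

lemma vnorm_apply_le (A : V k →L[ℝ] V k) (v : V k) :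
    vnorm (A v) ≤ opnorm A * vnorm v := by
  rcases eq_or_ne v 0 with rfl | hv
  · simp [map_zero, vnorm_zero, opnorm_nonneg]
  · have hc : 0 < vnorm v := by
      rcases (vnorm_nonneg v).lt_or_eq with h | h
      · exact h
      · exact absurd (vnorm_eq_zero h.symm) hv
    have hu : vnorm ((vnorm v)⁻¹ • v) ≤ 1 := by
      rw [vnorm_smul, abs_of_pos (inv_pos.2 hc), inv_mul_cancel₀ hc.ne']
    have hmem : vnorm (A ((vnorm v)⁻¹ • v)) ∈
        (fun v => vnorm (A v)) '' {v : V k | vnorm v ≤ 1} :=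
      ⟨_, hu, rfl⟩
    have hle := le_csSup (opnorm_bddAbove A) hmem
    rw [A.map_smul, vnorm_smul, abs_of_pos (inv_pos.2 hc)] at hle
    have : vnorm (A v) = vnorm v * ((vnorm v)⁻¹ * vnorm (A v)) := by
      field_simp
    rw [this]
    calc vnorm v * ((vnorm v)⁻¹ * vnorm (A v)) ≤ vnorm v * opnorm A := by
          exact mul_le_mul_of_nonneg_left hle hc.le
      _ = opnorm A * vnorm v := mul_comm _ _

lemma opnorm_le_three (A : V k →L[ℝ] V k) : opnorm A ≤ 3 * ‖A‖ := by
  apply Real.sSup_le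
  · rintro x ⟨v, hv, rfl⟩
    simp only [Set.mem_setOf_eq] at hv
    have h1 : vnorm (A v) ≤ 3 * ‖A v‖ := vnorm_le_three _
    have h2 : ‖A v‖ ≤ ‖A‖ * ‖v‖ := A.le_opNorm v
    have h3 : ‖v‖ ≤ vnorm v := norm_le_vnorm v
    have h4 : (0:ℝ) ≤ ‖A‖ := norm_nonneg A
    nlinarith
  · positivity

lemma opnorm_sub_le (A B : V k →L[ℝ] V k) : opnorm A ≤ opnorm B + 3 * ‖A - B‖ := by
  apply Real.sSup_le
  · rintro x ⟨v, hv, rfl⟩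
    simp only [Set.mem_setOf_eq] at hv
    have hAv : A v = B v + (A - B) v := by simp
    have h0 : vnorm (A v) ≤ vnorm (B v) + vnorm ((A - B) v) := by
      rw [hAv]; exact vnorm_add_le _ _
    have h1 : vnorm (B v) ≤ opnorm B * vnorm v := vnorm_apply_le B v
    have h2 : vnorm ((A - B) v) ≤ 3 * ‖(A - B) v‖ := vnorm_le_three _
    have h3 : ‖(A - B) v‖ ≤ ‖A - B‖ * ‖v‖ := (A - B).le_opNorm v
    have h4 : ‖v‖ ≤ vnorm v := norm_le_vnorm v
    have h5 : 0 ≤ opnorm B := opnorm_nonneg B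
    have h6 : (0:ℝ) ≤ ‖A - B‖ := norm_nonneg _
    have h7 : 0 ≤ vnorm v := vnorm_nonneg v
    have h8 : (0:ℝ) ≤ ‖v‖ := norm_nonneg v
    nlinarith
  · have := opnorm_nonneg B
    have : (0:ℝ) ≤ ‖A - B‖ := norm_nonneg _
    positivity

lemma continuous_opnorm : Continuous (opnorm : (V k →L[ℝ] V k) → ℝ) := by
  have : LipschitzWith 3 (opnorm : (V k →L[ℝ] V k) → ℝ) := by
    apply LipschitzWith.of_dist_le_mul
    intro A B
    rw [Real.dist_eq, dist_eq_norm, abs_sub_le_iff]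
    have h1 := opnorm_sub_le A B
    have h2 := opnorm_sub_le B A
    rw [norm_sub_rev B A] at h2
    constructor <;> [skip; skip] <;> push_cast <;> linarith
  exact this.continuous

lemma vnorm_integral_le (μ : Measure ℝ) (f : ℝ → V k) :
    vnorm (∫ s, f s ∂μ) ≤ ∫ s, vnorm (f s) ∂μ := by
  by_cases hf : Integrable f μ
  · set E1 := EuclideanSpace ℝ (Fin 3 × Fin 3)
    set E2 := EuclideanSpace ℝ (Fin k)
    set E3 := EuclideanSpace ℝ (Fin k × Fin 3)
    have L1 : (∫ s, f s ∂μ).1 = ∫ s, (f s).1 ∂μ :=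
      ((ContinuousLinearMap.fst ℝ E1 (E2 × E3)).integral_comp_comm hf).symm
    have L2 : (∫ s, f s ∂μ).2.1 = ∫ s, (f s).2.1 ∂μ := by
      have := (((ContinuousLinearMap.fst ℝ E2 E3).comp
        (ContinuousLinearMap.snd ℝ E1 (E2 × E3))).integral_comp_comm hf).symm
      simpa using this
    have L3 : (∫ s, f s ∂μ).2.2 = ∫ s, (f s).2.2 ∂μ := by
      have := (((ContinuousLinearMap.snd ℝ E2 E3).comp
        (ContinuousLinearMap.snd ℝ E1 (E2 × E3))).integral_comp_comm hf).symm
      simpa using this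
    have i1 : Integrable (fun s => (f s).1) μ :=
      (ContinuousLinearMap.fst ℝ E1 (E2 × E3)).integrable_comp hf
    have i2 : Integrable (fun s => (f s).2.1) μ := by
      have := ((ContinuousLinearMap.fst ℝ E2 E3).comp
        (ContinuousLinearMap.snd ℝ E1 (E2 × E3))).integrable_comp hf
      simpa using this
    have i3 : Integrable (fun s => (f s).2.2) μ := by
      have := ((ContinuousLinearMap.snd ℝ E2 E3).comp
        (ContinuousLinearMap.snd ℝ E1 (E2 × E3))).integrable_comp hf
      simpa using this
    have eq1 : ∫ s, vnorm (f s) ∂μ =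
        (∫ s, ‖(f s).1‖ ∂μ) + (∫ s, ‖(f s).2.1‖ ∂μ) + (∫ s, ‖(f s).2.2‖ ∂μ) := by
      unfold vnorm
      have i12 : Integrable (fun s => ‖(f s).1‖ + ‖(f s).2.1‖) μ := i1.norm.add i2.norm
      rw [integral_add i12 i3.norm, integral_add i1.norm i2.norm]
    rw [eq1]
    unfold vnorm
    rw [L1, L2, L3]
    have n1 := norm_integral_le_integral_norm (μ := μ) (f := fun s => (f s).1)
    have n2 := norm_integral_le_integral_norm (μ := μ) (f := fun s => (f s).2.1)
    have n3 := norm_integral_le_integral_norm (μ := μ) (f := fun s => (f s).2.2)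
    linarith
  · rw [integral_undef hf, vnorm_zero]
    exact integral_nonneg fun s => vnorm_nonneg _

end FadingAux


/-- Fading memory: if `‖H(s)‖ ≤ M` and `‖H'(s)‖ ≤ M` for all `s ≥ 0`,
then for every `p > 0` and every process `K` of duration `p` prolonging both,
`d(K∗H, K∗H') ≤ 2M ∫_p^∞ ‖Ġ(s)‖_op ds`; in particular for every `ε > 0` there is
`r > 0` with `d(K∗H, K∗H') < ε` for every `p > r` and every such process. -/
theorem hdist_fading_memory {k : ℕ} (G G' : ℝ → (V k →L[ℝ] V k))
    (hG : IsRelaxation G G') (M : ℝ) (H H' : ℝ → V k)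
    (hH : IsHistory H) (hH' : IsHistory H')
    (hbH : ∀ s : ℝ, 0 ≤ s → vnorm (H s) ≤ M)
    (hbH' : ∀ s : ℝ, 0 ≤ s → vnorm (H' s) ≤ M) :
    (∀ p : ℝ, 0 < p → ∀ K : ℝ → V k, Prolongs p K H → Prolongs p K H' →
      hdist G' (prolong p K H) (prolong p K H') ≤
        ENNReal.ofReal (2 * M * ∫ s in Set.Ioi p, opnorm (G' s))) ∧
    (∀ ε : ℝ, 0 < ε → ∃ r : ℝ, 0 < r ∧
      ∀ p : ℝ, r < p → ∀ K : ℝ → V k, Prolongs p K H → Prolongs p K H' →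
        hdist G' (prolong p K H) (prolong p K H') < ENNReal.ofReal ε) := by
  classical
  have hM : 0 ≤ M := le_trans (FadingAux.vnorm_nonneg (H 0)) (hbH 0 le_rfl)
  set φ : ℝ → ℝ := fun s => opnorm (G' s) with hφdef
  have hφnn : ∀ s, 0 ≤ φ s := fun s => FadingAux.opnorm_nonneg _
  have hφmeas : AEStronglyMeasurable φ (volume.restrict (Set.Ici 0)) :=
    FadingAux.continuous_opnorm.comp_aestronglyMeasurable hG.integrable.aestronglyMeasurable
  have hφint : IntegrableOn φ (Set.Ici 0) := by
    apply Integrable.mono' (hG.integrable.norm.const_mul 3) hφmeas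
    filter_upwards with s
    rw [Real.norm_eq_abs, abs_of_nonneg (hφnn s)]
    exact FadingAux.opnorm_le_three _
  have key : ∀ p : ℝ, 0 < p → ∀ K : ℝ → V k,
      hdist G' (prolong p K H) (prolong p K H') ≤
        ENNReal.ofReal (2 * M * ∫ s in Set.Ioi p, φ s) := by
    intro p hp K
    have hIoiInt : IntegrableOn φ (Set.Ioi p) :=
      hφint.mono_set (fun x hx => by
        simp only [Set.mem_Ioi, Set.mem_Ici] at *; linarith)
    apply iSup_le
    rintro ⟨t, ht⟩
    simp only [Set.mem_Ioi] at ht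
    apply ENNReal.ofReal_le_ofReal
    set D : ℝ → V k := fun s => prolong p K H s - prolong p K H' s with hDdef
    show vnorm (∫ s in Set.Ioi (0:ℝ), (G' (s + t)) (D s)) ≤
      2 * M * ∫ s in Set.Ioi p, φ s
    have emb : MeasurableEmbedding (fun s : ℝ => s + t) :=
      (Homeomorph.addRight t).isClosedEmbedding.measurableEmbedding
    have mp : MeasurePreserving (fun s : ℝ => s + t) volume volume :=
      measurePreserving_add_right volume t
    have hpre : (fun s : ℝ => s + t) ⁻¹' (Set.Ici (p + t)) = Set.Ici p := by
      ext x
      simp only [Set.mem_preimage, Set.mem_Ici]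
      constructor <;> intro <;> linarith
    have hint_shift : IntegrableOn (fun s => φ (s + t)) (Set.Ici p) := by
      have h1 : IntegrableOn φ (Set.Ici (p + t)) :=
        hφint.mono_set (fun x hx => by
          simp only [Set.mem_Ici] at *; linarith)
      have h2 := (mp.integrableOn_comp_preimage emb (f := φ) (s := Set.Ici (p + t))).2 h1
      rwa [hpre] at h2
    have heq_shift : (∫ s in Set.Ici p, φ (s + t)) = ∫ s in Set.Ici (p + t), φ s := by
      have h2 := mp.setIntegral_preimage_emb emb φ (Set.Ici (p + t))
      rwa [hpre] at h2
    have htail : (∫ s in Set.Ici (p + t), φ s) ≤ ∫ s in Set.Ioi p, φ s := by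
      apply setIntegral_mono_set hIoiInt
      · filter_upwards with s using hφnn s
      · apply HasSubset.Subset.eventuallyLE
        intro x hx
        simp only [Set.mem_Ici, Set.mem_Ioi] at *
        linarith
    set g : ℝ → ℝ := Set.indicator (Set.Ici p) (fun s => 2 * M * φ (s + t)) with hgdef
    have hrr : (volume.restrict (Set.Ioi 0)).restrict (Set.Ici p) =
        volume.restrict (Set.Ici p) := by
      rw [Measure.restrict_restrict measurableSet_Ici]
      congr 1
      rw [Set.inter_eq_left]
      intro x hx
      simp only [Set.mem_Ici, Set.mem_Ioi] at *
      linarith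
    have hg : Integrable g (volume.restrict (Set.Ioi 0)) := by
      apply IntegrableOn.integrable_indicator _ measurableSet_Ici
      show Integrable _ ((volume.restrict (Set.Ioi 0)).restrict (Set.Ici p))
      rw [hrr]
      exact hint_shift.const_mul _
    have hptwise : ∀ s : ℝ, vnorm ((G' (s + t)) (D s)) ≤ g s := by
      intro s
      by_cases hs : s < p
      · have hD0 : D s = 0 := by
          simp only [hDdef, prolong, if_pos hs, sub_self]
        rw [hD0, map_zero, FadingAux.vnorm_zero, hgdef,
          Set.indicator_of_notMem (by simp only [Set.mem_Ici, not_le]; linarith)]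
      · have hD1 : D s = H (s - p) - H' (s - p) := by
          simp only [hDdef, prolong, if_neg hs]
        have hsp : 0 ≤ s - p := by
          have := not_lt.1 hs; linarith
        have hb : vnorm (D s) ≤ 2 * M := by
          rw [hD1]
          calc vnorm (H (s - p) - H' (s - p))
              ≤ vnorm (H (s - p)) + vnorm (H' (s - p)) := FadingAux.vnorm_sub_le _ _
            _ ≤ 2 * M := by linarith [hbH _ hsp, hbH' _ hsp]
        have h1 := FadingAux.vnorm_apply_le (G' (s + t)) (D s)
        have h2 := hφnn (s + t)
        have hgv : g s = 2 * M * φ (s + t) := by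
          rw [hgdef, Set.indicator_of_mem
            (by simp only [Set.mem_Ici]; linarith [not_lt.1 hs])]
        rw [hgv]
        nlinarith [FadingAux.vnorm_nonneg (D s)]
    calc vnorm (∫ s in Set.Ioi (0:ℝ), (G' (s + t)) (D s))
        ≤ ∫ s in Set.Ioi (0:ℝ), vnorm ((G' (s + t)) (D s)) :=
          FadingAux.vnorm_integral_le _ _
      _ ≤ ∫ s in Set.Ioi (0:ℝ), g s := by
          apply integral_mono_of_nonneg
          · filter_upwards with s using FadingAux.vnorm_nonneg _
          · exact hg
          · filter_upwards with s using hptwise s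
      _ = ∫ s in Set.Ici p, (fun s => 2 * M * φ (s + t)) s
            ∂(volume.restrict (Set.Ioi 0)) := by
          rw [hgdef, integral_indicator measurableSet_Ici]
      _ = ∫ s in Set.Ici p, 2 * M * φ (s + t) := by
          show (∫ s, _ ∂((volume.restrict (Set.Ioi 0)).restrict (Set.Ici p))) = _
          rw [hrr]
      _ = 2 * M * ∫ s in Set.Ici p, φ (s + t) := integral_const_mul _ _
      _ = 2 * M * ∫ s in Set.Ici (p + t), φ s := by rw [heq_shift]
      _ ≤ 2 * M * ∫ s in Set.Ioi p, φ s :=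
          mul_le_mul_of_nonneg_left htail (by linarith)
  constructor
  · intro p hp K _ _
    exact key p hp K
  · intro ε hε
    have hF : Tendsto (fun p : ℝ => ∫ s in Set.Ioi p, φ s) atTop (𝓝 0) := by
      have hDCT : Tendsto
          (fun p : ℝ => ∫ s in Set.Ici (0:ℝ), Set.indicator (Set.Ioi p) φ s) atTop
          (𝓝 (∫ s in Set.Ici (0:ℝ), (0:ℝ))) := by
        apply tendsto_integral_filter_of_dominated_convergence φ
        · filter_upwards with p
          exact hφmeas.indicator measurableSet_Ioi
        · filter_upwards with p
          filter_upwards with s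
          rw [Real.norm_eq_abs]
          by_cases hs : s ∈ Set.Ioi p
          · rw [Set.indicator_of_mem hs, abs_of_nonneg (hφnn s)]
          · rw [Set.indicator_of_notMem hs, abs_zero]
            exact hφnn s
        · exact hφint
        · filter_upwards with s
          apply Tendsto.congr' _ tendsto_const_nhds
          filter_upwards [eventually_ge_atTop s] with p hp
          rw [Set.indicator_of_notMem (by simp only [Set.mem_Ioi, not_lt]; linarith)]
      rw [integral_zero] at hDCT
      apply Filter.Tendsto.congr' _ hDCT
      filter_upwards [eventually_ge_atTop (0:ℝ)] with p hp
      rw [integral_indicator measurableSet_Ioi]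
      show (∫ s, φ s ∂((volume.restrict (Set.Ici 0)).restrict (Set.Ioi p))) = _
      rw [Measure.restrict_restrict measurableSet_Ioi]
      congr 2
      rw [Set.inter_eq_left]
      intro x hx
      simp only [Set.mem_Ici, Set.mem_Ioi] at *
      linarith
    have h2 : Tendsto (fun p : ℝ => 2 * M * ∫ s in Set.Ioi p, φ s) atTop (𝓝 0) := by
      have := hF.const_mul (2 * M)
      simpa using this
    have h3 : ∀ᶠ p : ℝ in atTop, 2 * M * (∫ s in Set.Ioi p, φ s) < ε :=
      h2.eventually_lt_const hε
    rcases eventually_atTop.1 h3 with ⟨a, ha⟩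
    refine ⟨max a 1, lt_of_lt_of_le zero_lt_one (le_max_right a 1), ?_⟩
    intro p hp K _ _
    have hp0 : 0 < p := lt_trans (lt_of_lt_of_le zero_lt_one (le_max_right a 1)) hp
    refine lt_of_le_of_lt (key p hp0 K) ?_
    exact (ENNReal.ofReal_lt_ofReal_iff hε).2 (ha p (le_trans (le_max_left a 1) hp.le))
end
end

section
/- The work over prolongations is additive: for a differentiable history H, a differentiable process K of duration p with lim_{s↗p} K(s) = H(0), and a differentiable process K' of duration p' with lim_{s↗p'} K'(s) = K(0), one has w(K'∗K, H) = w(K', K∗H) + w(K, H), where K'∗K is the process of duration p + p' defined by (K'∗K)(s) := K'(s) for 0 ≤ s < p' and := K(s−p') for p' ≤ s < p + p'. Hence the work over a prolongation is additive with respect to prolongations (the first defining property of an action). -/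
open MeasureTheory Filter Topology
open scoped ENNReal Classical

noncomputable section

/-- the work over prolongations is additive:
`w(K'∗K, H) = w(K', K∗H) + w(K, H)` (first defining property of an action). -/
theorem workP_additive {k : ℕ} (G G' : ℝ → (V k →L[ℝ] V k))
    (hG : IsRelaxation G G') (H Hd : ℝ → V k) (hH : IsDiffHistory H Hd)
    (p p' : ℝ) (K Kd K' K'd : ℝ → V k)
    (hK : IsDiffProcess p K Kd) (hK' : IsDiffProcess p' K' K'd)
    (hKH : Prolongs p K H) (hK'K : Tendsto K' (𝓝[<] p') (𝓝 (K 0))) :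
    workP G G' (p + p') (prolong p' K' K) (prolong p' K'd Kd) H Hd =
      workP G G' p' K' K'd (prolong p K H) (prolong p Kd Hd) +
        workP G G' p K Kd H Hd := by
  have hp := hK.pos
  have key : ∀ (A B C : ℝ → V k),
      prolong (p + p') (prolong p' A B) C = prolong p' A (prolong p B C) := by
    intro A B C; funext s
    simp only [prolong]
    split_ifs <;> first
      | rfl
      | (exfalso; linarith)
      | (congr 1; ring)
  have e1 : prolong (p + p') (prolong p' K' K) H
      = prolong p' K' (prolong p K H) := key K' K H
  have e2 : prolong (p + p') (prolong p' K'd Kd) Hd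
      = prolong p' K'd (prolong p Kd Hd) := key K'd Kd Hd
  simp only [workP, e1, e2]
  ring
end
end

section
/- For every differentiable process K_p of duration p with integrable derivative K̇_p = (Ẇ_p, ν̇_p, Ṅ_p), and all differentiable histories H, H' that K_p prolongs, |w(K_p, H) − w(K_p, H')| ≤ d(H,H') · ∫₀^p ( |Ẇ_p(s)| + |ν̇_p(s)| + |Ṅ_p(s)| ) ds. In particular, for fixed K_p the map H ↦ w(K_p, H) is Lipschitz continuous with respect to d and is a state function (it takes equal values on equivalent histories). -/
open MeasureTheory Filter Topology
open scoped ENNReal Classical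

noncomputable section

set_option maxHeartbeats 1000000

namespace WorkAux

open Set MeasureTheory

variable {k : ℕ}

lemma vnorm_nonneg (v : V k) : 0 ≤ vnorm v := by
  unfold vnorm; positivity

lemma vnorm_add_le (a b : V k) : vnorm (a + b) ≤ vnorm a + vnorm b := by
  have h1 := norm_add_le a.1 b.1
  have h2 := norm_add_le a.2.1 b.2.1
  have h3 := norm_add_le a.2.2 b.2.2
  unfold vnorm
  simp only [Prod.fst_add, Prod.snd_add]
  linarith

lemma norm_le_vnorm (v : V k) : ‖v‖ ≤ vnorm v := by
  have h1 : ‖v‖ = max ‖v.1‖ ‖v.2‖ := rfl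
  have h2 : ‖v.2‖ = max ‖v.2.1‖ ‖v.2.2‖ := rfl
  rw [h1, h2]
  unfold vnorm
  refine max_le ?_ (max_le ?_ ?_) <;>
    nlinarith [norm_nonneg v.1, norm_nonneg v.2.1, norm_nonneg v.2.2]

lemma vnorm_le_three (v : V k) : vnorm v ≤ 3 * ‖v‖ := by
  have h1 : ‖v.1‖ ≤ ‖v‖ := norm_fst_le v
  have h2 : ‖v.2.1‖ ≤ ‖v‖ := (norm_fst_le v.2).trans (norm_snd_le v)
  have h3 : ‖v.2.2‖ ≤ ‖v‖ := (norm_snd_le v.2).trans (norm_snd_le v)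
  unfold vnorm; linarith

lemma abs_vinner_le (a b : V k) : |vinner a b| ≤ vnorm a * vnorm b := by
  have h1 := abs_real_inner_le_norm a.1 b.1
  have h2 := abs_real_inner_le_norm a.2.1 b.2.1
  have h3 := abs_real_inner_le_norm a.2.2 b.2.2
  have h0 : |vinner a b| ≤ |(inner ℝ a.1 b.1 : ℝ)| + |(inner ℝ a.2.1 b.2.1 : ℝ)|
      + |(inner ℝ a.2.2 b.2.2 : ℝ)| := by
    unfold vinner
    calc |(inner ℝ a.1 b.1 : ℝ) + (inner ℝ a.2.1 b.2.1 : ℝ) + (inner ℝ a.2.2 b.2.2 : ℝ)|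
        ≤ |(inner ℝ a.1 b.1 : ℝ) + (inner ℝ a.2.1 b.2.1 : ℝ)| + |(inner ℝ a.2.2 b.2.2 : ℝ)| :=
          abs_add_le _ _
      _ ≤ _ := by gcongr; exact abs_add_le _ _
  unfold vnorm
  nlinarith [norm_nonneg a.1, norm_nonneg a.2.1, norm_nonneg a.2.2,
    norm_nonneg b.1, norm_nonneg b.2.1, norm_nonneg b.2.2,
    mul_nonneg (norm_nonneg a.1) (norm_nonneg b.2.1),
    mul_nonneg (norm_nonneg a.1) (norm_nonneg b.2.2),
    mul_nonneg (norm_nonneg a.2.1) (norm_nonneg b.1),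
    mul_nonneg (norm_nonneg a.2.1) (norm_nonneg b.2.2),
    mul_nonneg (norm_nonneg a.2.2) (norm_nonneg b.1),
    mul_nonneg (norm_nonneg a.2.2) (norm_nonneg b.2.1)]

lemma vinner_sub_left (a b c : V k) : vinner (a - b) c = vinner a c - vinner b c := by
  unfold vinner
  simp only [Prod.fst_sub, Prod.snd_sub, inner_sub_left]
  ring

lemma vinner_zero_left (c : V k) : vinner 0 c = 0 := by
  unfold vinner
  simp only [Prod.fst_zero, Prod.snd_zero, inner_zero_left]
  ring

lemma continuous_vnorm : Continuous (vnorm (k := k)) := by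
  unfold vnorm; fun_prop

lemma continuous_vinner : Continuous (fun q : V k × V k => vinner q.1 q.2) := by
  unfold vinner
  have h1 : Continuous fun q : V k × V k => (inner ℝ q.1.1 q.2.1 : ℝ) :=
    continuous_inner.comp ((continuous_fst.fst).prodMk (continuous_snd.fst))
  have h2 : Continuous fun q : V k × V k => (inner ℝ q.1.2.1 q.2.2.1 : ℝ) :=
    continuous_inner.comp ((continuous_fst.snd.fst).prodMk (continuous_snd.snd.fst))
  have h3 : Continuous fun q : V k × V k => (inner ℝ q.1.2.2 q.2.2.2 : ℝ) :=
    continuous_inner.comp ((continuous_fst.snd.snd).prodMk (continuous_snd.snd.snd))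
  exact (h1.add h2).add h3

lemma integral_Ioi_comp_sub {E : Type*} [NormedAddCommGroup E] [NormedSpace ℝ E]
    (f : ℝ → E) (c : ℝ) :
    ∫ s in Ioi c, f (s - c) = ∫ s in Ioi (0:ℝ), f s := by
  rw [← integral_indicator measurableSet_Ioi, ← integral_indicator measurableSet_Ioi]
  have h : (Ioi c).indicator (fun s => f (s - c)) = fun s => (Ioi (0:ℝ)).indicator f (s - c) := by
    funext s
    by_cases h : c < s
    · rw [Set.indicator_of_mem (Set.mem_Ioi.2 h), Set.indicator_of_mem (Set.mem_Ioi.2 (by linarith))]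
    · rw [Set.indicator_of_notMem (by simpa using h),
        Set.indicator_of_notMem (by simp only [Set.mem_Ioi, sub_pos]; exact h)]
  rw [h, integral_sub_right_eq_self (fun s => (Ioi (0:ℝ)).indicator f s) c]

lemma response_congr (G G' : ℝ → (V k →L[ℝ] V k)) (f g : ℝ → V k)
    (h0 : f 0 = g 0) (h : ∀ u ∈ Ioi (0:ℝ), f u = g u) :
    response G G' f = response G G' g := by
  unfold response
  rw [h0, setIntegral_congr_fun measurableSet_Ioi (fun u hu => by rw [h u hu])]

lemma stronglyMeasurable_conv (g : ℝ → (V k →L[ℝ] V k)) (hg : StronglyMeasurable g)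
    (Bm : ℝ → V k) (hBm : StronglyMeasurable Bm) :
    StronglyMeasurable (fun s : ℝ => ∫ u in Ioi (0:ℝ), (g u) (Bm (s + u))) := by
  have h1 : StronglyMeasurable (Function.uncurry fun (s u : ℝ) => (g u) (Bm (s + u))) := by
    have hg2 : StronglyMeasurable fun q : ℝ × ℝ => g q.2 := hg.comp_measurable measurable_snd
    have hB2 : StronglyMeasurable fun q : ℝ × ℝ => Bm (q.1 + q.2) :=
      hBm.comp_measurable (measurable_fst.add measurable_snd)
    exact (isBoundedBilinearMap_apply.continuous).comp_stronglyMeasurable (hg2.prodMk hB2)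
  exact h1.integral_prod_right

lemma integrable_G'B (G' : ℝ → (V k →L[ℝ] V k)) (hG' : IntegrableOn G' (Ici 0))
    (B : ℝ → V k) (Cb : ℝ) (hB : ∀ t, 0 ≤ t → ‖B t‖ ≤ Cb)
    (Bm : ℝ → V k) (hBm : StronglyMeasurable Bm) (hBeq : ∀ t, 0 ≤ t → B t = Bm t)
    (s : ℝ) (hs : 0 ≤ s) :
    IntegrableOn (fun u => (G' u) (B (s + u))) (Ioi (0:ℝ)) := by
  have hG'i : IntegrableOn G' (Ioi (0:ℝ)) := hG'.mono_set Ioi_subset_Ici_self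
  have hmeas : AEStronglyMeasurable (fun u => (G' u) (B (s + u)))
      (volume.restrict (Ioi (0:ℝ))) := by
    have h1 : AEStronglyMeasurable (fun u : ℝ => ((G' u), Bm (s + u)))
        (volume.restrict (Ioi (0:ℝ))) :=
      hG'i.aestronglyMeasurable.prodMk
        ((hBm.comp_measurable (measurable_const.add measurable_id)).aestronglyMeasurable)
    have h2 := (isBoundedBilinearMap_apply.continuous (𝕜 := ℝ)).comp_aestronglyMeasurable h1
    refine h2.congr ?_
    filter_upwards [ae_restrict_mem measurableSet_Ioi] with u hu
    show (G' u) (Bm (s + u)) = (G' u) (B (s + u))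
    rw [← hBeq (s + u) (by have := Set.mem_Ioi.1 hu; linarith)]
  refine Integrable.mono' ((hG'i.norm).mul_const Cb) hmeas ?_
  filter_upwards [ae_restrict_mem measurableSet_Ioi] with u hu
  have hu' : (0:ℝ) < u := hu
  calc ‖(G' u) (B (s + u))‖ ≤ ‖G' u‖ * ‖B (s + u)‖ := (G' u).le_opNorm _
    _ ≤ ‖G' u‖ * Cb :=
      mul_le_mul_of_nonneg_left (hB _ (by linarith)) (norm_nonneg _)

lemma response_vnorm_le (G G' : ℝ → (V k →L[ℝ] V k)) (hG' : IntegrableOn G' (Ici 0))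
    (B : ℝ → V k) (Cb : ℝ) (hCb : 0 ≤ Cb) (hB : ∀ t, 0 ≤ t → ‖B t‖ ≤ Cb)
    (s : ℝ) (hs : 0 ≤ s) :
    vnorm (response G G' (shift B s)) ≤
      3 * ‖G 0‖ * Cb + 3 * (∫ u in Ioi (0:ℝ), ‖G' u‖) * Cb := by
  have hG'i : IntegrableOn G' (Ioi (0:ℝ)) := hG'.mono_set Ioi_subset_Ici_self
  unfold response shift
  refine (vnorm_add_le _ _).trans ?_
  have h1 : vnorm ((G 0) (B (s + 0))) ≤ 3 * ‖G 0‖ * Cb := by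
    refine (vnorm_le_three _).trans ?_
    have ha := (G 0).le_opNorm (B (s + 0))
    have hb := hB (s + 0) (by simpa using hs)
    nlinarith [norm_nonneg (G 0), norm_nonneg (B (s + 0))]
  have h2 : vnorm (∫ u in Ioi (0:ℝ), (G' u) (B (s + u))) ≤
      3 * (∫ u in Ioi (0:ℝ), ‖G' u‖) * Cb := by
    refine (vnorm_le_three _).trans ?_
    have hb : ‖∫ u in Ioi (0:ℝ), (G' u) (B (s + u))‖ ≤ ∫ u in Ioi (0:ℝ), ‖G' u‖ * Cb := by
      refine norm_integral_le_of_norm_le ((hG'i.norm).mul_const Cb) ?_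
      filter_upwards [ae_restrict_mem measurableSet_Ioi] with u hu
      have hu' : (0:ℝ) < u := hu
      calc ‖(G' u) (B (s + u))‖ ≤ ‖G' u‖ * ‖B (s + u)‖ := (G' u).le_opNorm _
        _ ≤ ‖G' u‖ * Cb :=
          mul_le_mul_of_nonneg_left (hB _ (by linarith)) (norm_nonneg _)
    rw [integral_mul_const] at hb
    linarith
  linarith

lemma integrable_work_integrand (G G' : ℝ → (V k →L[ℝ] V k)) (hG' : IntegrableOn G' (Ici 0))
    (B : ℝ → V k) (Cb : ℝ) (hCb : 0 ≤ Cb) (hB : ∀ t, 0 ≤ t → ‖B t‖ ≤ Cb)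
    (Bm : ℝ → V k) (hBm : StronglyMeasurable Bm) (hBeq : ∀ t, 0 ≤ t → B t = Bm t)
    (D : ℝ → V k) (S : Set ℝ) (hS : MeasurableSet S) (hSsub : S ⊆ Ioi 0)
    (hD : IntegrableOn D S) :
    IntegrableOn (fun s => vinner (response G G' (shift B s)) (D s)) S := by
  obtain ⟨g, hg, hGg⟩ : ∃ g, StronglyMeasurable g ∧ G' =ᵐ[volume.restrict (Ici 0)] g :=
    ⟨hG'.aestronglyMeasurable.mk _, hG'.aestronglyMeasurable.stronglyMeasurable_mk,
      hG'.aestronglyMeasurable.ae_eq_mk⟩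
  have hGg' : G' =ᵐ[volume.restrict (Ioi (0:ℝ))] g :=
    ae_restrict_of_ae_restrict_of_subset Ioi_subset_Ici_self hGg
  set Ψ : ℝ → V k := fun s => (G 0) (Bm s) + ∫ u in Ioi (0:ℝ), (g u) (Bm (s + u)) with hΨ
  have hΨm : StronglyMeasurable Ψ :=
    ((G 0).continuous.comp_stronglyMeasurable hBm).add (stronglyMeasurable_conv g hg Bm hBm)
  have hresp : ∀ s ∈ S, response G G' (shift B s) = Ψ s := by
    intro s hs
    have hs0 : (0:ℝ) < s := hSsub hs
    unfold response shift
    congr 1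
    · rw [add_zero, hBeq s hs0.le]
    · refine integral_congr_ae ?_
      filter_upwards [hGg', ae_restrict_mem measurableSet_Ioi] with u hgu hu
      have hu' : (0:ℝ) < u := hu
      rw [hgu, hBeq (s + u) (by linarith)]
  set Cr : ℝ := 3 * ‖G 0‖ * Cb + 3 * (∫ u in Ioi (0:ℝ), ‖G' u‖) * Cb with hCr
  have hCr0 : 0 ≤ Cr := by
    have h1 : 0 ≤ ∫ u in Ioi (0:ℝ), ‖G' u‖ := integral_nonneg fun u => norm_nonneg _
    positivity
  have hmeas : AEStronglyMeasurable (fun s => vinner (response G G' (shift B s)) (D s))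
      (volume.restrict S) := by
    have hpair : AEStronglyMeasurable (fun s => (Ψ s, D s)) (volume.restrict S) :=
      hΨm.aestronglyMeasurable.prodMk hD.aestronglyMeasurable
    have h1 := continuous_vinner.comp_aestronglyMeasurable hpair
    refine h1.congr ?_
    filter_upwards [ae_restrict_mem hS] with s hs
    show vinner (Ψ s) (D s) = _
    rw [hresp s hs]
  refine Integrable.mono' (((hD.norm).const_mul 3).const_mul Cr) hmeas ?_
  filter_upwards [ae_restrict_mem hS] with s hs
  rw [Real.norm_eq_abs]
  calc |vinner (response G G' (shift B s)) (D s)|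
      ≤ vnorm (response G G' (shift B s)) * vnorm (D s) := abs_vinner_le _ _
    _ ≤ Cr * (3 * ‖D s‖) :=
      mul_le_mul (response_vnorm_le G G' hG' B Cb hCb hB s (le_of_lt (hSsub hs)))
        (vnorm_le_three _) (vnorm_nonneg _) hCr0

end WorkAux
namespace WorkAux

open Set MeasureTheory

variable {k : ℕ}

lemma prolong_bound_rep (p : ℝ) (K Kd H Hd : ℝ → V k)
    (hK : IsDiffProcess p K Kd) (hH : IsDiffHistory H Hd) :
    ∃ (Cb : ℝ) (Fm : ℝ → V k), 0 ≤ Cb ∧ StronglyMeasurable Fm ∧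
      (∀ t, 0 ≤ t → ‖prolong p K H t‖ ≤ Cb) ∧
      (∀ t, 0 ≤ t → prolong p K H t = Fm t) := by
  obtain ⟨C1, hC1⟩ := hH.hist.bounded
  have hHb : ∀ t, 0 ≤ t → ‖H t‖ ≤ C1 := fun t ht => (norm_le_vnorm _).trans (hC1 t ht)
  set CK : ℝ := ‖K 0‖ + ∫ s in Icc (0:ℝ) p, ‖Kd s‖ with hCK
  have hKb : ∀ t, 0 ≤ t → t < p → ‖K t‖ ≤ CK := by
    intro t ht htp
    rw [hK.ftc t ht htp]
    refine (norm_add_le _ _).trans ?_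
    have h1 : ‖∫ s in Icc (0:ℝ) t, Kd s‖ ≤ ∫ s in Icc (0:ℝ) t, ‖Kd s‖ :=
      norm_integral_le_integral_norm _
    have h2 : ∫ s in Icc (0:ℝ) t, ‖Kd s‖ ≤ ∫ s in Icc (0:ℝ) p, ‖Kd s‖ :=
      setIntegral_mono_set hK.integrable.norm (ae_of_all _ fun s => norm_nonneg _)
        (HasSubset.Subset.eventuallyLE (Icc_subset_Icc_right htp.le))
    rw [hCK]; linarith
  have hHd0i : Integrable ((Ici (0:ℝ)).indicator Hd) :=
    (integrable_indicator_iff measurableSet_Ici).2 hH.integrable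
  set Hc : ℝ → V k := fun t => H 0 + ∫ u in (0:ℝ)..t, (Ici (0:ℝ)).indicator Hd u with hHcdef
  have hHccont : Continuous Hc := continuous_const.add
    (intervalIntegral.continuous_primitive (fun a b => hHd0i.intervalIntegrable) 0)
  have hHc : ∀ t, 0 ≤ t → H t = Hc t := by
    intro t ht
    rw [hH.ftc t ht, hHcdef]
    simp only
    congr 1
    rw [intervalIntegral.integral_of_le ht, setIntegral_indicator measurableSet_Ici,
      Set.inter_eq_left.2 (show Ioc (0:ℝ) t ⊆ Ici 0 from fun u hu => le_of_lt hu.1), integral_Icc_eq_integral_Ioc]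
  have hKd0i : Integrable ((Icc (0:ℝ) p).indicator Kd) :=
    (integrable_indicator_iff measurableSet_Icc).2 hK.integrable
  set Kc : ℝ → V k := fun t => K 0 + ∫ u in (0:ℝ)..t, (Icc (0:ℝ) p).indicator Kd u with hKcdef
  have hKccont : Continuous Kc := continuous_const.add
    (intervalIntegral.continuous_primitive (fun a b => hKd0i.intervalIntegrable) 0)
  have hKc : ∀ t, 0 ≤ t → t < p → K t = Kc t := by
    intro t ht htp
    rw [hK.ftc t ht htp, hKcdef]
    simp only
    congr 1
    rw [intervalIntegral.integral_of_le ht, setIntegral_indicator measurableSet_Icc,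
      Set.inter_eq_left.2 (show Ioc (0:ℝ) t ⊆ Icc 0 p from fun u hu => ⟨le_of_lt hu.1, hu.2.trans htp.le⟩),
      integral_Icc_eq_integral_Ioc]
  refine ⟨max (max C1 CK) 0, fun s => if s < p then Kc s else Hc (s - p), le_max_right _ _,
    ?_, ?_, ?_⟩
  · exact StronglyMeasurable.ite measurableSet_Iio hKccont.stronglyMeasurable
      ((hHccont.comp (continuous_id.sub continuous_const)).stronglyMeasurable)
  · intro t ht
    simp only [prolong]
    split_ifs with h
    · exact (hKb t ht h).trans (le_max_of_le_left (le_max_right _ _))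
    · exact (hHb _ (by linarith [not_lt.1 h])).trans (le_max_of_le_left (le_max_left _ _))
  · intro t ht
    simp only [prolong]
    split_ifs with h
    · exact hKc t ht h
    · exact hHc _ (by linarith [not_lt.1 h])

lemma work_prolong_decomp (G G' : ℝ → (V k →L[ℝ] V k)) (hG' : IntegrableOn G' (Ici 0))
    (p : ℝ) (K Kd H Hd : ℝ → V k) (hK : IsDiffProcess p K Kd) (hH : IsDiffHistory H Hd) :
    workP G G' p K Kd H Hd =
      (∫ s in Ioo (0:ℝ) p, vinner (response G G' (shift (prolong p K H) s)) (Kd s)) ∧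
    IntegrableOn (fun s => vinner (response G G' (shift (prolong p K H) s)) (Kd s))
      (Ioo (0:ℝ) p) := by
  obtain ⟨Cb, Fm, hCb0, hFmm, hFb, hFeq⟩ := prolong_bound_rep p K Kd H Hd hK hH
  have hpne : ∀ᵐ s : ℝ, s ≠ p := by
    refine (ae_iff).2 ?_
    rw [show {a : ℝ | ¬ a ≠ p} = {p} from by ext a; simp [eq_comm]]
    exact measure_singleton p
  have hKdIoc : IntegrableOn Kd (Ioc 0 p) := hK.integrable.mono_set Ioc_subset_Icc_self
  have hFdIoc : IntegrableOn (prolong p Kd Hd) (Ioc 0 p) := by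
    refine hKdIoc.congr ?_
    filter_upwards [ae_restrict_mem measurableSet_Ioc, ae_restrict_of_ae hpne] with s hs hsp
    have hlt : s < p := lt_of_le_of_ne hs.2 hsp
    simp [prolong, hlt]
  have hHd0i : Integrable ((Ici (0:ℝ)).indicator Hd) :=
    (integrable_indicator_iff measurableSet_Ici).2 hH.integrable
  have hFdIoi : IntegrableOn (prolong p Kd Hd) (Ioi p) := by
    have h1 : Integrable (fun s => (Ici (0:ℝ)).indicator Hd (s - p)) := hHd0i.comp_sub_right p
    refine h1.integrableOn.congr ?_
    filter_upwards [ae_restrict_mem measurableSet_Ioi] with s hs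
    have hsp : p < s := hs
    rw [Set.indicator_of_mem (by simp only [Set.mem_Ici]; linarith)]
    simp [prolong, not_lt.2 hsp.le]
  have hIF_Ioc : IntegrableOn
      (fun s => vinner (response G G' (shift (prolong p K H) s)) (prolong p Kd Hd s))
      (Ioc (0:ℝ) p) :=
    integrable_work_integrand G G' hG' (prolong p K H) Cb hCb0 hFb Fm hFmm hFeq
      (prolong p Kd Hd) _ measurableSet_Ioc Ioc_subset_Ioi_self hFdIoc
  have hIF_Ioi : IntegrableOn
      (fun s => vinner (response G G' (shift (prolong p K H) s)) (prolong p Kd Hd s))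
      (Ioi p) :=
    integrable_work_integrand G G' hG' (prolong p K H) Cb hCb0 hFb Fm hFmm hFeq
      (prolong p Kd Hd) _ measurableSet_Ioi (Ioi_subset_Ioi hK.pos.le) hFdIoi
  have hJ_Ioo : IntegrableOn
      (fun s => vinner (response G G' (shift (prolong p K H) s)) (Kd s)) (Ioo (0:ℝ) p) :=
    integrable_work_integrand G G' hG' (prolong p K H) Cb hCb0 hFb Fm hFmm hFeq
      Kd _ measurableSet_Ioo (fun s hs => hs.1) (hK.integrable.mono_set Ioo_subset_Icc_self)
  refine ⟨?_, hJ_Ioo⟩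
  have hsplit : (∫ s in Ioi (0:ℝ),
        vinner (response G G' (shift (prolong p K H) s)) (prolong p Kd Hd s)) =
      (∫ s in Ioc (0:ℝ) p,
        vinner (response G G' (shift (prolong p K H) s)) (prolong p Kd Hd s)) +
      ∫ s in Ioi p,
        vinner (response G G' (shift (prolong p K H) s)) (prolong p Kd Hd s) := by
    rw [← setIntegral_union (Set.Ioc_disjoint_Ioi le_rfl) measurableSet_Ioi hIF_Ioc hIF_Ioi,
      Set.Ioc_union_Ioi_eq_Ioi hK.pos.le]
  have htail : (∫ s in Ioi p,
        vinner (response G G' (shift (prolong p K H) s)) (prolong p Kd Hd s)) =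
      ∫ s in Ioi (0:ℝ), vinner (response G G' (shift H s)) (Hd s) := by
    have h1 : EqOn
        (fun s => vinner (response G G' (shift (prolong p K H) s)) (prolong p Kd Hd s))
        (fun s => (fun r => vinner (response G G' (shift H r)) (Hd r)) (s - p)) (Ioi p) := by
      intro s hs
      have hps : p < s := hs
      have e1 : prolong p Kd Hd s = Hd (s - p) := by simp [prolong, not_lt.2 hps.le]
      have e2 : response G G' (shift (prolong p K H) s) = response G G' (shift H (s - p)) := by
        refine response_congr G G' _ _ ?_ ?_
        · show prolong p K H (s + 0) = H (s - p + 0)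
          rw [add_zero, add_zero]
          simp [prolong, not_lt.2 hps.le]
        · intro u hu
          have hu0 : (0:ℝ) < u := hu
          show prolong p K H (s + u) = H (s - p + u)
          have hns : ¬ s + u < p := by push_neg; linarith
          simp only [prolong, if_neg hns]
          congr 1; ring
      simp only
      rw [e1, e2]
    rw [setIntegral_congr_fun measurableSet_Ioi h1,
      integral_Ioi_comp_sub (fun r => vinner (response G G' (shift H r)) (Hd r)) p]
  have hIoc : (∫ s in Ioc (0:ℝ) p,
        vinner (response G G' (shift (prolong p K H) s)) (prolong p Kd Hd s)) =
      ∫ s in Ioo (0:ℝ) p, vinner (response G G' (shift (prolong p K H) s)) (Kd s) := by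
    rw [← integral_Ioc_eq_integral_Ioo]
    refine integral_congr_ae ?_
    filter_upwards [ae_restrict_mem measurableSet_Ioc, ae_restrict_of_ae hpne] with s hs hsp
    have hlt : s < p := lt_of_le_of_ne hs.2 hsp
    rw [show prolong p Kd Hd s = Kd s from by simp [prolong, hlt]]
  show (∫ s in Ioi (0:ℝ),
      vinner (response G G' (shift (prolong p K H) s)) (prolong p Kd Hd s)) -
    (∫ s in Ioi (0:ℝ), vinner (response G G' (shift H s)) (Hd s)) = _
  rw [hsplit, htail, hIoc]
  ring

end WorkAux
/-- `|w(K_p,H) − w(K_p,H')| ≤ d(H,H') · ∫₀^p ‖K̇_p(s)‖ ds`; in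
particular, for fixed `K_p` the map `H ↦ w(K_p,H)` is Lipschitz continuous with
respect to `d` and is a state function. -/
theorem workP_lipschitz_state {k : ℕ} (G G' : ℝ → (V k →L[ℝ] V k))
    (hG : IsRelaxation G G') (p : ℝ) (K Kd : ℝ → V k)
    (hK : IsDiffProcess p K Kd) (H Hd H' H'd : ℝ → V k)
    (hH : IsDiffHistory H Hd) (hH' : IsDiffHistory H' H'd)
    (hpH : Prolongs p K H) (hpH' : Prolongs p K H') :
    (ENNReal.ofReal |workP G G' p K Kd H Hd - workP G G' p K Kd H' H'd| ≤
      hdist G' H H' * ENNReal.ofReal (∫ s in Set.Icc (0:ℝ) p, vnorm (Kd s))) ∧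
    (EquivHist G G' H H' →
      workP G G' p K Kd H Hd = workP G G' p K Kd H' H'd) := by
  classical
  obtain ⟨CbF, FmF, hCbF0, hFmF, hFbF, hFeqF⟩ := WorkAux.prolong_bound_rep p K Kd H Hd hK hH
  obtain ⟨CbF', FmF', hCbF0', hFmF', hFbF', hFeqF'⟩ :=
    WorkAux.prolong_bound_rep p K Kd H' H'd hK hH'
  obtain ⟨hdec, hJint⟩ := WorkAux.work_prolong_decomp G G' hG.integrable p K Kd H Hd hK hH
  obtain ⟨hdec', hJ'int⟩ := WorkAux.work_prolong_decomp G G' hG.integrable p K Kd H' H'd hK hH'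
  have hpne : ∀ s0 : ℝ, ∀ᵐ s : ℝ, s ≠ s0 := by
    intro s0
    refine (MeasureTheory.ae_iff).2 ?_
    rw [show {a : ℝ | ¬ a ≠ s0} = {s0} from by ext a; simp [eq_comm]]
    exact measure_singleton s0
  set Df : ℝ → V k := fun s =>
    response G G' (shift (prolong p K H) s) - response G G' (shift (prolong p K H') s)
    with hDf
  have hΔ : workP G G' p K Kd H Hd - workP G G' p K Kd H' H'd =
      ∫ s in Set.Ioo (0:ℝ) p, vinner (Df s) (Kd s) := by
    rw [hdec, hdec', ← MeasureTheory.integral_sub hJint hJ'int]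
    exact MeasureTheory.integral_congr_ae
      (Filter.Eventually.of_forall fun s => (WorkAux.vinner_sub_left _ _ _).symm)
  have hdiffeq : ∀ s ∈ Set.Ioo (0:ℝ) p,
      Df s = ∫ r in Set.Ioi (0:ℝ), (G' (r + (p - s))) (H r - H' r) := by
    intro s hs
    obtain ⟨hs0, hsp⟩ := hs
    have hint1 : MeasureTheory.IntegrableOn (fun u => (G' u) (prolong p K H (s + u)))
        (Set.Ioi (0:ℝ)) :=
      WorkAux.integrable_G'B G' hG.integrable _ CbF hFbF FmF hFmF hFeqF s hs0.le
    have hint2 : MeasureTheory.IntegrableOn (fun u => (G' u) (prolong p K H' (s + u)))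
        (Set.Ioi (0:ℝ)) :=
      WorkAux.integrable_G'B G' hG.integrable _ CbF' hFbF' FmF' hFmF' hFeqF' s hs0.le
    have e1 : response G G' (shift (prolong p K H) s) =
        (G 0) (prolong p K H s) + ∫ u in Set.Ioi (0:ℝ), (G' u) (prolong p K H (s + u)) := by
      simp only [response, shift, add_zero]
    have e2 : response G G' (shift (prolong p K H') s) =
        (G 0) (prolong p K H' s) + ∫ u in Set.Ioi (0:ℝ), (G' u) (prolong p K H' (s + u)) := by
      simp only [response, shift, add_zero]
    have eK : prolong p K H s = prolong p K H' s := by simp [prolong, hsp]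
    have hφint : MeasureTheory.IntegrableOn
        (fun u => (G' u) (prolong p K H (s + u) - prolong p K H' (s + u)))
        (Set.Ioi (0:ℝ)) :=
      (hint1.sub hint2).congr
        (Filter.Eventually.of_forall fun u => (map_sub (G' u) _ _).symm)
    have hsplitφ : (∫ u in Set.Ioi (0:ℝ),
          (G' u) (prolong p K H (s + u) - prolong p K H' (s + u))) =
        (∫ u in Set.Ioc (0:ℝ) (p - s),
          (G' u) (prolong p K H (s + u) - prolong p K H' (s + u))) +
        ∫ u in Set.Ioi (p - s),
          (G' u) (prolong p K H (s + u) - prolong p K H' (s + u)) := by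
      rw [← MeasureTheory.setIntegral_union (Set.Ioc_disjoint_Ioi le_rfl) measurableSet_Ioi
        (hφint.mono_set Set.Ioc_subset_Ioi_self)
        (hφint.mono_set (Set.Ioi_subset_Ioi (by linarith))),
        Set.Ioc_union_Ioi_eq_Ioi (by linarith : (0:ℝ) ≤ p - s)]
    have hzero : (∫ u in Set.Ioc (0:ℝ) (p - s),
          (G' u) (prolong p K H (s + u) - prolong p K H' (s + u))) = 0 := by
      refine MeasureTheory.integral_eq_zero_of_ae ?_
      filter_upwards [MeasureTheory.ae_restrict_mem measurableSet_Ioc,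
        MeasureTheory.ae_restrict_of_ae (hpne (p - s))] with u hu hune
      have hu' : u < p - s := lt_of_le_of_ne hu.2 hune
      have hlt : s + u < p := by linarith
      simp [prolong, hlt]
    have htailφ : (∫ u in Set.Ioi (p - s),
          (G' u) (prolong p K H (s + u) - prolong p K H' (s + u))) =
        ∫ r in Set.Ioi (0:ℝ), (G' (r + (p - s))) (H r - H' r) := by
      have hEqOn : Set.EqOn
          (fun u => (G' u) (prolong p K H (s + u) - prolong p K H' (s + u)))
          (fun u => (fun r => (G' (r + (p - s))) (H r - H' r)) (u - (p - s)))
          (Set.Ioi (p - s)) := by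
        intro u hu
        have hu' : p - s < u := hu
        have hns : ¬ s + u < p := by push_neg; linarith
        simp only [prolong, if_neg hns]
        rw [show u - (p - s) + (p - s) = u by ring, show s + u - p = u - (p - s) by ring]
      rw [MeasureTheory.setIntegral_congr_fun measurableSet_Ioi hEqOn,
        WorkAux.integral_Ioi_comp_sub (fun r => (G' (r + (p - s))) (H r - H' r)) (p - s)]
    calc Df s = (∫ u in Set.Ioi (0:ℝ), (G' u) (prolong p K H (s + u))) -
        ∫ u in Set.Ioi (0:ℝ), (G' u) (prolong p K H' (s + u)) := by
          rw [hDf]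
          simp only
          rw [e1, e2, eK, add_sub_add_left_eq_sub]
      _ = ∫ u in Set.Ioi (0:ℝ), (G' u) (prolong p K H (s + u) - prolong p K H' (s + u)) := by
          rw [← MeasureTheory.integral_sub hint1 hint2]
          exact MeasureTheory.integral_congr_ae
            (Filter.Eventually.of_forall fun u => (map_sub (G' u) _ _).symm)
      _ = _ := by rw [hsplitφ, hzero, htailφ, zero_add]
  constructor
  · rw [hΔ]
    have hvKdIcc : MeasureTheory.IntegrableOn (fun s => vnorm (Kd s)) (Set.Icc (0:ℝ) p) := by
      have hm := WorkAux.continuous_vnorm.comp_aestronglyMeasurable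
        hK.integrable.aestronglyMeasurable
      refine MeasureTheory.Integrable.mono' (hK.integrable.norm.const_mul 3) hm ?_
      refine Filter.Eventually.of_forall fun s => ?_
      rw [Real.norm_eq_abs, abs_of_nonneg (WorkAux.vnorm_nonneg _)]
      exact WorkAux.vnorm_le_three _
    have hvKdIoo : MeasureTheory.IntegrableOn (fun s => vnorm (Kd s)) (Set.Ioo (0:ℝ) p) :=
      hvKdIcc.mono_set Set.Ioo_subset_Icc_self
    have hintD : MeasureTheory.IntegrableOn (fun s => vinner (Df s) (Kd s))
        (Set.Ioo (0:ℝ) p) :=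
      (hJint.sub hJ'int).congr
        (Filter.Eventually.of_forall fun s => (WorkAux.vinner_sub_left _ _ _).symm)
    calc ENNReal.ofReal |∫ s in Set.Ioo (0:ℝ) p, vinner (Df s) (Kd s)|
        ≤ ENNReal.ofReal (∫ s in Set.Ioo (0:ℝ) p, |vinner (Df s) (Kd s)|) := by
          refine ENNReal.ofReal_le_ofReal ?_
          have h := MeasureTheory.norm_integral_le_integral_norm
            (μ := MeasureTheory.volume.restrict (Set.Ioo (0:ℝ) p))
            (fun s => vinner (Df s) (Kd s))
          simpa [Real.norm_eq_abs] using h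
      _ = ∫⁻ s in Set.Ioo (0:ℝ) p, ENNReal.ofReal |vinner (Df s) (Kd s)| :=
          MeasureTheory.ofReal_integral_eq_lintegral_ofReal hintD.abs
            (Filter.Eventually.of_forall fun s => abs_nonneg _)
      _ ≤ ∫⁻ s in Set.Ioo (0:ℝ) p, hdist G' H H' * ENNReal.ofReal (vnorm (Kd s)) := by
          refine MeasureTheory.lintegral_mono_ae ?_
          filter_upwards [MeasureTheory.ae_restrict_mem measurableSet_Ioo] with s hs
          calc ENNReal.ofReal |vinner (Df s) (Kd s)|
              ≤ ENNReal.ofReal (vnorm (Df s) * vnorm (Kd s)) :=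
                ENNReal.ofReal_le_ofReal (WorkAux.abs_vinner_le _ _)
            _ = ENNReal.ofReal (vnorm (Df s)) * ENNReal.ofReal (vnorm (Kd s)) :=
                ENNReal.ofReal_mul (WorkAux.vnorm_nonneg _)
            _ ≤ hdist G' H H' * ENNReal.ofReal (vnorm (Kd s)) := by
                refine mul_le_mul_left ?_ _
                rw [hdiffeq s hs]
                exact le_iSup (fun t : Set.Ioi (0:ℝ) => ENNReal.ofReal
                  (vnorm (∫ r in Set.Ioi (0:ℝ), (G' (r + (t:ℝ))) (H r - H' r))))
                  ⟨p - s, Set.mem_Ioi.2 (by linarith [hs.1, hs.2])⟩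
      _ = hdist G' H H' * ∫⁻ s in Set.Ioo (0:ℝ) p, ENNReal.ofReal (vnorm (Kd s)) :=
          MeasureTheory.lintegral_const_mul'' _
            ((hvKdIoo.aestronglyMeasurable.aemeasurable).ennreal_ofReal)
      _ = hdist G' H H' * ENNReal.ofReal (∫ s in Set.Ioo (0:ℝ) p, vnorm (Kd s)) := by
          rw [MeasureTheory.ofReal_integral_eq_lintegral_ofReal hvKdIoo
            (Filter.Eventually.of_forall fun s => WorkAux.vnorm_nonneg _)]
      _ ≤ hdist G' H H' * ENNReal.ofReal (∫ s in Set.Icc (0:ℝ) p, vnorm (Kd s)) := by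
          refine mul_le_mul_right (ENNReal.ofReal_le_ofReal ?_) _
          exact MeasureTheory.setIntegral_mono_set hvKdIcc
            (Filter.Eventually.of_forall fun s => WorkAux.vnorm_nonneg _)
            (HasSubset.Subset.eventuallyLE Set.Ioo_subset_Icc_self)
  · intro hEq
    have hdiff0 : ∀ s ∈ Set.Ioo (0:ℝ) p, Df s = 0 := by
      intro s hs
      have hps : 0 < p - s := by linarith [hs.2]
      have hmap : Filter.Tendsto (fun u => s + u) (𝓝[<] (p - s)) (𝓝[<] p) := by
        refine tendsto_nhdsWithin_of_tendsto_nhds_of_eventually_within _ ?_ ?_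
        · have hc : Continuous (fun u : ℝ => s + u) := continuous_const.add continuous_id
          have h := (hc.tendsto (p - s)).mono_left
            (nhdsWithin_le_nhds (s := Set.Iio (p - s)))
          simpa using h
        · filter_upwards [self_mem_nhdsWithin] with u hu
          have hu' : u < p - s := hu
          exact Set.mem_Iio.2 (by linarith)
      have hpro : Prolongs (p - s) (shift K s) H := hpH.comp hmap
      have hre := hEq.2 (p - s) hps (shift K s) hpro
      have e1 : shift (prolong p K H) s = prolong (p - s) (shift K s) H := by
        funext u
        simp only [shift, prolong]
        by_cases h : s + u < p
        · rw [if_pos h, if_pos (by linarith : u < p - s)]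
        · rw [if_neg h, if_neg (by intro hx; exact h (by linarith))]
          congr 1
          ring
      have e1' : shift (prolong p K H') s = prolong (p - s) (shift K s) H' := by
        funext u
        simp only [shift, prolong]
        by_cases h : s + u < p
        · rw [if_pos h, if_pos (by linarith : u < p - s)]
        · rw [if_neg h, if_neg (by intro hx; exact h (by linarith))]
          congr 1
          ring
      rw [hDf]
      simp only
      rw [e1, e1', hre, sub_self]
    have h0 : (∫ s in Set.Ioo (0:ℝ) p, vinner (Df s) (Kd s)) = 0 := by
      rw [MeasureTheory.setIntegral_congr_fun (g := fun _ => (0:ℝ)) measurableSet_Ioo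
        (fun s hs => by rw [hdiff0 s hs, WorkAux.vinner_zero_left]),
        MeasureTheory.integral_zero]
    have hfin := hΔ.trans h0
    linarith [hfin]
end
end
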